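/- arXiv:1902.01456 — 7 statements merged into one kernel-verified Lean document; each statement's English description precedes it below -/
import Mathlib

section
/- Let (Ω,P) be a probability space, ν : Ω → ℝ uniformly distributed on [0,1], and Z₁,…,Z_k real-valued random variables such that the vector (Z₁,…,Z_k) is independent of ν and E[Z_j²] ≤ C_Z² for every j, where C_Z ≥ 0. Let ω, ω̃ ∈ [0,∞)^k with ω₁+…+ω_k ≤ 1 and ω̃₁+…+ω̃_k ≤ 1, and let μ, μ̃, σ, σ̃ ∈ ℝ^k with |μ_j| ≤ μ̄, |μ̃_j| ≤ μ̄, |σ_j| ≤ σ̄, |σ̃_j| ≤ σ̄ for all j. Set s₀ = 0, s_j = ω₁+…+ω_j, and s̃_j likewise, and define the mixture draws e = Σ_{j=1}^k 1{ν ∈ [s_{j−1}, s_j)}·(μ_j + σ_j Z_j) and ẽ = Σ_{j=1}^k 1{ν ∈ [s̃_{j−1}, s̃_j)}·(μ̃_j + σ̃_j Z_j). If the Euclidean distance of the stacked parameter vectors satisfies ‖(ω,μ,σ) − (ω̃,μ̃,σ̃)‖₂ ≤ δ with 0 ≤ δ ≤ 1, then (E|e − ẽ|²)^{1/2} ≤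 2√2·(1 + C_Z)·(1 + μ̄ + σ̄)·(1 + k)·√δ. -/
open MeasureTheory ProbabilityTheory Finset

section Helpers

variable {α : Type*} [MeasurableSpace α] {μ : Measure α}

/-- Cauchy–Schwarz for integrals. -/
lemma integral_mul_le_sqrt_mul_sqrt (f g : α → ℝ)
    (hfm : AEStronglyMeasurable f μ) (hgm : AEStronglyMeasurable g μ)
    (hf2 : Integrable (fun x => f x ^ 2) μ) (hg2 : Integrable (fun x => g x ^ 2) μ) :
    ∫ x, f x * g x ∂μ ≤ Real.sqrt (∫ x, f x ^ 2 ∂μ) * Real.sqrt (∫ x, g x ^ 2 ∂μ) := by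
  have hfg : Integrable (fun x => f x * g x) μ := by
    refine Integrable.mono' (hf2.add hg2) (hfm.mul hgm) (Filter.Eventually.of_forall fun x => ?_)
    simp only [Pi.add_apply, norm_mul, Real.norm_eq_abs]
    nlinarith [sq_nonneg (|f x| - |g x|), sq_abs (f x), sq_abs (g x), abs_nonneg (f x),
      abs_nonneg (g x)]
  have habs : Integrable (fun x => |f x| * |g x|) μ := by
    refine hfg.abs.congr (Filter.Eventually.of_forall fun x => ?_)
    simp [abs_mul]
  have h1 : ∫ x, f x * g x ∂μ ≤ ∫ x, |f x| * |g x| ∂μ := by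
    refine integral_mono hfg habs fun x => ?_
    calc f x * g x ≤ |f x * g x| := le_abs_self _
    _ = |f x| * |g x| := abs_mul _ _
  have hfabs : AEStronglyMeasurable (fun x => |f x|) μ := by
    simpa [Real.norm_eq_abs] using hfm.norm
  have hgabs : AEStronglyMeasurable (fun x => |g x|) μ := by
    simpa [Real.norm_eq_abs] using hgm.norm
  have hpq : Real.HolderConjugate 2 2 := ⟨by norm_num, by norm_num, by norm_num⟩
  have hfmem : MemLp (fun x => |f x|) (ENNReal.ofReal 2) μ := by
    have : MemLp (fun x => |f x|) 2 μ := by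
      rw [memLp_two_iff_integrable_sq hfabs]
      refine hf2.congr (Filter.Eventually.of_forall fun x => ?_)
      simp [sq_abs]
    simpa [ENNReal.ofReal_ofNat] using this
  have hgmem : MemLp (fun x => |g x|) (ENNReal.ofReal 2) μ := by
    have : MemLp (fun x => |g x|) 2 μ := by
      rw [memLp_two_iff_integrable_sq hgabs]
      refine hg2.congr (Filter.Eventually.of_forall fun x => ?_)
      simp [sq_abs]
    simpa [ENNReal.ofReal_ofNat] using this
  have h2 := integral_mul_le_Lp_mul_Lq_of_nonneg hpq
    (Filter.Eventually.of_forall fun x => abs_nonneg (f x))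
    (Filter.Eventually.of_forall fun x => abs_nonneg (g x)) hfmem hgmem
  have hrw : ∀ h : α → ℝ, ∫ x, |h x| ^ (2:ℝ) ∂μ = ∫ x, h x ^ 2 ∂μ := by
    intro h
    refine integral_congr_ae (Filter.Eventually.of_forall fun x => ?_)
    show |h x| ^ (2:ℝ) = h x ^ 2
    rw [show ((2:ℝ)) = ((2:ℕ):ℝ) by norm_num, Real.rpow_natCast, sq_abs]
  rw [hrw f, hrw g] at h2
  rw [← Real.sqrt_eq_rpow, ← Real.sqrt_eq_rpow] at h2
  exact h1.trans h2



/-- L² triangle inequality in integral form. -/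
lemma sqrt_integral_add_sq_le (f g : α → ℝ)
    (hfm : AEStronglyMeasurable f μ) (hgm : AEStronglyMeasurable g μ)
    (hf2 : Integrable (fun x => f x ^ 2) μ) (hg2 : Integrable (fun x => g x ^ 2) μ) :
    Real.sqrt (∫ x, (f x + g x) ^ 2 ∂μ)
      ≤ Real.sqrt (∫ x, f x ^ 2 ∂μ) + Real.sqrt (∫ x, g x ^ 2 ∂μ) := by
  have hfg : Integrable (fun x => f x * g x) μ := by
    refine Integrable.mono' (hf2.add hg2) (hfm.mul hgm) (Filter.Eventually.of_forall fun x => ?_)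
    simp only [Pi.add_apply, norm_mul, Real.norm_eq_abs]
    nlinarith [sq_nonneg (|f x| - |g x|), sq_abs (f x), sq_abs (g x), abs_nonneg (f x),
      abs_nonneg (g x)]
  set A := ∫ x, f x ^ 2 ∂μ with hA
  set B := ∫ x, g x ^ 2 ∂μ with hB
  have hA0 : 0 ≤ A := integral_nonneg fun x => sq_nonneg _
  have hB0 : 0 ≤ B := integral_nonneg fun x => sq_nonneg _
  have hCS := integral_mul_le_sqrt_mul_sqrt f g hfm hgm hf2 hg2
  have hexp : ∫ x, (f x + g x) ^ 2 ∂μ = A + 2 * ∫ x, f x * g x ∂μ + B := by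
    have h1 : (fun x => (f x + g x) ^ 2)
        = fun x => (f x ^ 2 + 2 * (f x * g x)) + g x ^ 2 := by
      funext x; ring
    rw [h1]
    have e1 := integral_add (hf2.add (hfg.const_mul 2)) hg2
    have e2 := integral_add hf2 (hfg.const_mul 2)
    simp only [Pi.add_apply] at e1 e2
    rw [e1, e2, integral_const_mul]
  have hle : ∫ x, (f x + g x) ^ 2 ∂μ ≤ (Real.sqrt A + Real.sqrt B) ^ 2 := by
    rw [hexp, add_sq, Real.sq_sqrt hA0, Real.sq_sqrt hB0]
    nlinarith [hCS]
  calc Real.sqrt (∫ x, (f x + g x) ^ 2 ∂μ) ≤ Real.sqrt ((Real.sqrt A + Real.sqrt B) ^ 2) :=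
        Real.sqrt_le_sqrt hle
    _ = Real.sqrt A + Real.sqrt B :=
        Real.sqrt_sq (by positivity)

/-- The partial-sum intervals are essentially disjoint: the sum of their indicators
telescopes. -/
lemma chain_le (s : ℕ → ℝ) (n : ℕ) (hs : ∀ j, j < n → s j ≤ s (j+1)) : s 0 ≤ s n := by
  induction n with
  | zero => exact le_refl _
  | succ n ih =>
    exact le_trans (ih fun j hj => hs j (Nat.lt_succ_of_lt hj)) (hs n (Nat.lt_succ_self n))

lemma sum_ico_indicator_eq (s : ℕ → ℝ) (n : ℕ) (hs : ∀ j, j < n → s j ≤ s (j+1)) (t : ℝ) :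
    ∑ j ∈ range n, (Set.Ico (s j) (s (j+1))).indicator (fun _ => (1:ℝ)) t
      = (Set.Ico (s 0) (s n)).indicator (fun _ => (1:ℝ)) t := by
  induction n with
  | zero => simp
  | succ n ih =>
    have hsn : ∀ j, j < n → s j ≤ s (j+1) := fun j hj => hs j (Nat.lt_succ_of_lt hj)
    have h0n : s 0 ≤ s n := chain_le s n hsn
    have hnn : s n ≤ s (n+1) := hs n (Nat.lt_succ_self n)
    have ih := ih hsn
    rw [sum_range_succ, ih]

    simp only [Set.indicator_apply, Set.mem_Ico]
    by_cases hA : s 0 ≤ t ∧ t < s n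
    · have hB : ¬(s n ≤ t ∧ t < s (n+1)) := fun hB => absurd hA.2 (not_lt.mpr hB.1)
      have hC : s 0 ≤ t ∧ t < s (n+1) := ⟨hA.1, lt_of_lt_of_le hA.2 hnn⟩
      simp [hA, hB, hC]
    · by_cases hB : s n ≤ t ∧ t < s (n+1)
      · have hC : s 0 ≤ t ∧ t < s (n+1) := ⟨le_trans h0n hB.1, hB.2⟩
        simp [hA, hB, hC]
      · have hC : ¬(s 0 ≤ t ∧ t < s (n+1)) := by
          rintro ⟨hc1, hc2⟩
          rcases lt_or_ge t (s n) with h | h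
          · exact hA ⟨hc1, h⟩
          · exact hB ⟨h, hc2⟩
        simp [hA, hB, hC]

lemma sum_ico_indicator_le_one (s : ℕ → ℝ) (n : ℕ) (hs : ∀ j, j < n → s j ≤ s (j+1)) (t : ℝ) :
    ∑ j ∈ range n, (Set.Ico (s j) (s (j+1))).indicator (fun _ => (1:ℝ)) t ≤ 1 := by
  rw [sum_ico_indicator_eq s n hs t]
  rw [Set.indicator_apply]
  split_ifs <;> norm_num

lemma mem_sym_diff_aux {a b a' b' t : ℝ} (h1 : t ∈ Set.Ico a b) (h2 : t ∉ Set.Ico a' b') :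
    t ∈ Set.Ico (min a a') (max a a') ∨ t ∈ Set.Ico (min b b') (max b b') := by
  simp only [Set.mem_Ico, not_and, not_lt] at *
  rcases lt_or_ge t a' with h | h
  · exact Or.inl ⟨le_trans (min_le_left a a') h1.1, lt_of_lt_of_le h (le_max_right a a')⟩
  · exact Or.inr ⟨le_trans (min_le_right b b') (h2 h), lt_of_lt_of_le h1.2 (le_max_left b b')⟩

lemma ind_sub_sq_le (a b a' b' t : ℝ) :
    ((Set.Ico a b).indicator (fun _ => (1:ℝ)) t
        - (Set.Ico a' b').indicator (fun _ => (1:ℝ)) t) ^ 2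
      ≤ (Set.Ico (min a a') (max a a')).indicator (fun _ => (1:ℝ)) t
        + (Set.Ico (min b b') (max b b')).indicator (fun _ => (1:ℝ)) t := by
  have hnn : ∀ (S : Set ℝ), 0 ≤ S.indicator (fun _ => (1:ℝ)) t := fun S =>
    Set.indicator_nonneg (fun _ _ => zero_le_one) t
  have hone : ∀ (S : Set ℝ) (h : t ∈ S), S.indicator (fun _ => (1:ℝ)) t = 1 := fun S h =>
    Set.indicator_of_mem h _
  by_cases h1 : t ∈ Set.Ico a b <;> by_cases h2 : t ∈ Set.Ico a' b'
  · rw [Set.indicator_of_mem h1, Set.indicator_of_mem h2]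
    simpa using add_nonneg (hnn _) (hnn _)
  · rw [Set.indicator_of_mem h1, Set.indicator_of_notMem h2]
    rcases mem_sym_diff_aux h1 h2 with h | h
    · rw [hone _ h]; norm_num [hnn]
    · rw [hone _ h]; have := hnn (Set.Ico (min a a') (max a a')); norm_num; linarith
  · rw [Set.indicator_of_notMem h1, Set.indicator_of_mem h2]
    have h2' : t ∉ Set.Ico a b := h1
    rcases mem_sym_diff_aux h2 h2' with h | h
    · rw [min_comm a' a, max_comm a' a] at h
      rw [hone _ h]; norm_num [hnn]
    · rw [min_comm b' b, max_comm b' b] at h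
      rw [hone _ h]; have := hnn (Set.Ico (min a a') (max a a')); norm_num; linarith
  · rw [Set.indicator_of_notMem h1, Set.indicator_of_notMem h2]
    simpa using add_nonneg (hnn _) (hnn _)

lemma ind_zero_or_one (S : Set ℝ) (t : ℝ) :
    S.indicator (fun _ => (1:ℝ)) t = 0 ∨ S.indicator (fun _ => (1:ℝ)) t = 1 := by
  by_cases h : t ∈ S
  · exact Or.inr (Set.indicator_of_mem h _)
  · exact Or.inl (Set.indicator_of_notMem h _)

lemma sum_mul_sq_bound (n : ℕ) (d Y : ℕ → ℝ) (hd : ∀ j, j < n → d j = -1 ∨ d j = 0 ∨ d j = 1)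
    (hsum : ∑ j ∈ range n, d j ^ 2 ≤ 2) :
    (∑ j ∈ range n, d j * Y j) ^ 2 ≤ 2 * ∑ j ∈ range n, d j ^ 2 * Y j ^ 2 := by
  have h1 : ∀ j ∈ range n, d j ^ 2 * (d j * Y j) = d j * Y j := by
    intro j hj; rcases hd j (mem_range.mp hj) with h | h | h <;> rw [h] <;> ring
  have h2 : (∑ j ∈ range n, d j * Y j) = ∑ j ∈ range n, d j ^ 2 * (d j * Y j) :=
    (sum_congr rfl h1).symm
  have hcs := sum_mul_sq_le_sq_mul_sq (range n) (fun j => d j ^ 2) (fun j => d j * Y j)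
  have h3 : ∑ j ∈ range n, (d j ^ 2) ^ 2 = ∑ j ∈ range n, d j ^ 2 :=
    sum_congr rfl fun j hj => by
      rcases hd j (mem_range.mp hj) with h | h | h <;> rw [h] <;> norm_num
  have h4 : ∑ j ∈ range n, (d j * Y j) ^ 2 = ∑ j ∈ range n, d j ^ 2 * Y j ^ 2 :=
    sum_congr rfl fun j _ => by ring
  have h5 : (0:ℝ) ≤ ∑ j ∈ range n, d j ^ 2 * Y j ^ 2 :=
    sum_nonneg fun j _ => by positivity
  calc (∑ j ∈ range n, d j * Y j) ^ 2
      = (∑ j ∈ range n, d j ^ 2 * (d j * Y j)) ^ 2 := by rw [← h2]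
    _ ≤ (∑ j ∈ range n, (d j ^ 2) ^ 2) * ∑ j ∈ range n, (d j * Y j) ^ 2 := hcs
    _ = (∑ j ∈ range n, d j ^ 2) * ∑ j ∈ range n, d j ^ 2 * Y j ^ 2 := by rw [h3, h4]
    _ ≤ 2 * ∑ j ∈ range n, d j ^ 2 * Y j ^ 2 := mul_le_mul_of_nonneg_right hsum h5

lemma sum_ind_mul_sq_bound (n : ℕ) (a Y : ℕ → ℝ) (ha : ∀ j, j < n → a j = 0 ∨ a j = 1)
    (hsum : ∑ j ∈ range n, a j ≤ 1) :
    (∑ j ∈ range n, a j * Y j) ^ 2 ≤ ∑ j ∈ range n, Y j ^ 2 := by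
  have h1 : ∀ j ∈ range n, a j * (a j * Y j) = a j * Y j := by
    intro j hj; rcases ha j (mem_range.mp hj) with h | h <;> rw [h] <;> ring
  have hcs := sum_mul_sq_le_sq_mul_sq (range n) (fun j => a j) (fun j => a j * Y j)
  have h3 : ∑ j ∈ range n, a j ^ 2 = ∑ j ∈ range n, a j :=
    sum_congr rfl fun j hj => by
      rcases ha j (mem_range.mp hj) with h | h <;> rw [h] <;> norm_num
  have h4 : ∑ j ∈ range n, (a j * Y j) ^ 2 ≤ ∑ j ∈ range n, Y j ^ 2 :=
    sum_le_sum fun j hj => by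
      rcases ha j (mem_range.mp hj) with h | h <;> rw [h] <;> nlinarith [sq_nonneg (Y j)]
  have h5 : (0:ℝ) ≤ ∑ j ∈ range n, (a j * Y j) ^ 2 := sum_nonneg fun j _ => sq_nonneg _
  have h6 : ∑ j ∈ range n, a j * Y j = ∑ j ∈ range n, a j * (a j * Y j) :=
    (sum_congr rfl h1).symm
  calc (∑ j ∈ range n, a j * Y j) ^ 2
      = (∑ j ∈ range n, a j * (a j * Y j)) ^ 2 := by rw [← h6]
    _ ≤ (∑ j ∈ range n, a j ^ 2) * ∑ j ∈ range n, (a j * Y j) ^ 2 := hcs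
    _ ≤ 1 * ∑ j ∈ range n, Y j ^ 2 := by
        rw [h3]
        exact mul_le_mul hsum h4 h5 zero_le_one
    _ = ∑ j ∈ range n, Y j ^ 2 := one_mul _

lemma affine_sq_int {Ω : Type*} [MeasurableSpace Ω] (P : Measure Ω) [IsProbabilityMeasure P]
    (Zf : Ω → ℝ) (hZm : Measurable Zf) (hZi : Integrable (fun x => Zf x ^ 2) P) (c d : ℝ) :
    Integrable (fun x => (c + d * Zf x) ^ 2) P := by
  refine Integrable.mono' ((integrable_const (2*c^2)).add (hZi.const_mul (2*d^2)))
    ((measurable_const.add (measurable_const.mul hZm)).pow_const 2).aestronglyMeasurable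
    (Filter.Eventually.of_forall fun x => ?_)
  simp only [Pi.add_apply, Real.norm_eq_abs]
  rw [abs_of_nonneg (sq_nonneg _)]
  nlinarith [sq_nonneg (c - d * Zf x)]

lemma affine_sq_bound {Ω : Type*} [MeasurableSpace Ω] (P : Measure Ω) [IsProbabilityMeasure P]
    (Zf : Ω → ℝ) (hZm : Measurable Zf) (hZi : Integrable (fun x => Zf x ^ 2) P) (c d : ℝ) :
    ∫ x, (c + d * Zf x) ^ 2 ∂P ≤ 2*c^2 + 2*d^2 * ∫ x, Zf x ^ 2 ∂P := by
  have hint := affine_sq_int P Zf hZm hZi c d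
  have hb : Integrable (fun x => 2*c^2 + 2*d^2 * Zf x ^ 2) P :=
    (integrable_const (2*c^2)).add (hZi.const_mul (2*d^2))
  have h1 : ∀ x, (c + d * Zf x) ^ 2 ≤ 2*c^2 + 2*d^2 * Zf x ^ 2 := fun x => by
    nlinarith [sq_nonneg (c - d * Zf x)]
  calc ∫ x, (c + d * Zf x) ^ 2 ∂P ≤ ∫ x, 2*c^2 + 2*d^2 * Zf x ^ 2 ∂P :=
        integral_mono hint hb h1
    _ = 2*c^2 + 2*d^2 * ∫ x, Zf x ^ 2 ∂P := by
        rw [integral_add (integrable_const _) (hZi.const_mul _), integral_const,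
          integral_const_mul]
        simp [measure_univ]

end Helpers

set_option maxHeartbeats 2000000 in
/-- L²-smoothness of simulated Gaussian-mixture draws with respect to the
Euclidean norm on the mixture parameters. -/
theorem stmt_0
    {Ω : Type*} [MeasurableSpace Ω] (P : Measure Ω) [IsProbabilityMeasure P]
    (k : ℕ) (hk : 1 ≤ k)
    (ν : Ω → ℝ) (hνmeas : Measurable ν)
    (hνunif : P.map ν = volume.restrict (Set.Icc (0:ℝ) 1))
    (Z : ℕ → Ω → ℝ) (hZmeas : ∀ j, Measurable (Z j))
    (hindep : IndepFun (fun x (j : Fin k) => Z j x) ν P)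
    (CZ : ℝ) (hCZ : 0 ≤ CZ)
    (hZint : ∀ j, j < k → Integrable (fun x => (Z j x) ^ 2) P)
    (hZmom : ∀ j, j < k → (∫ x, (Z j x) ^ 2 ∂P) ≤ CZ ^ 2)
    (w w' μ μ' σ σ' : ℕ → ℝ) (μbar σbar : ℝ)
    (hw0 : ∀ j, j < k → 0 ≤ w j) (hw'0 : ∀ j, j < k → 0 ≤ w' j)
    (hwsum : ∑ j ∈ range k, w j ≤ 1) (hw'sum : ∑ j ∈ range k, w' j ≤ 1)
    (hμ : ∀ j, j < k → |μ j| ≤ μbar) (hμ' : ∀ j, j < k → |μ' j| ≤ μbar)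
    (hσ : ∀ j, j < k → |σ j| ≤ σbar) (hσ' : ∀ j, j < k → |σ' j| ≤ σbar)
    (δ : ℝ) (hδ0 : 0 ≤ δ) (hδ1 : δ ≤ 1)
    (hdist : Real.sqrt (∑ j ∈ range k,
        ((w j - w' j) ^ 2 + (μ j - μ' j) ^ 2 + (σ j - σ' j) ^ 2)) ≤ δ) :
    Real.sqrt (∫ x,
        ((∑ j ∈ range k,
            Set.indicator (Set.Ico (∑ l ∈ range j, w l) (∑ l ∈ range (j+1), w l))
              (fun _ => (1:ℝ)) (ν x) * (μ j + σ j * Z j x))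
          - ∑ j ∈ range k,
            Set.indicator (Set.Ico (∑ l ∈ range j, w' l) (∑ l ∈ range (j+1), w' l))
              (fun _ => (1:ℝ)) (ν x) * (μ' j + σ' j * Z j x)) ^ 2 ∂P)
      ≤ 2 * Real.sqrt 2 * (1 + CZ) * (1 + μbar + σbar) * (1 + (k:ℝ)) * Real.sqrt δ := by
  classical
  have hμbar0 : 0 ≤ μbar := le_trans (abs_nonneg _) (hμ 0 hk)
  have hσbar0 : 0 ≤ σbar := le_trans (abs_nonneg _) (hσ 0 hk)
  have hkR : (1:ℝ) ≤ (k:ℝ) := by exact_mod_cast hk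
  have hkR0 : (0:ℝ) ≤ (k:ℝ) := by linarith
  have h1CZ : (0:ℝ) ≤ 1 + CZ := by linarith
  have hsqδ : Real.sqrt δ ≤ 1 := Real.sqrt_le_one.mpr hδ1
  -- distance facts
  have hsumd_nonneg : (0:ℝ) ≤ ∑ j ∈ range k,
      ((w j - w' j) ^ 2 + (μ j - μ' j) ^ 2 + (σ j - σ' j) ^ 2) :=
    sum_nonneg fun j _ => by positivity
  have hsum_le : ∑ j ∈ range k,
      ((w j - w' j) ^ 2 + (μ j - μ' j) ^ 2 + (σ j - σ' j) ^ 2) ≤ δ ^ 2 := by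
    nlinarith [Real.sq_sqrt hsumd_nonneg, Real.sqrt_nonneg (∑ j ∈ range k,
      ((w j - w' j) ^ 2 + (μ j - μ' j) ^ 2 + (σ j - σ' j) ^ 2)), hdist, hδ0]
  have hw2 : ∑ j ∈ range k, (w j - w' j) ^ 2 ≤ δ ^ 2 :=
    le_trans (sum_le_sum fun j _ => by
      nlinarith [sq_nonneg (μ j - μ' j), sq_nonneg (σ j - σ' j)]) hsum_le
  have hμ2 : ∑ j ∈ range k, (μ j - μ' j) ^ 2 ≤ δ ^ 2 :=
    le_trans (sum_le_sum fun j _ => by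
      nlinarith [sq_nonneg (w j - w' j), sq_nonneg (σ j - σ' j)]) hsum_le
  have hσ2 : ∑ j ∈ range k, (σ j - σ' j) ^ 2 ≤ δ ^ 2 :=
    le_trans (sum_le_sum fun j _ => by
      nlinarith [sq_nonneg (w j - w' j), sq_nonneg (μ j - μ' j)]) hsum_le
  have habsw : ∑ l ∈ range k, |w l - w' l| ≤ (k:ℝ) * δ := by
    have hcs := sum_mul_sq_le_sq_mul_sq (range k) (fun _ => (1:ℝ)) (fun l => |w l - w' l|)
    simp only [one_pow, one_mul, sq_abs, sum_const, card_range, nsmul_eq_mul, mul_one] at hcs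
    have h1 : (∑ l ∈ range k, |w l - w' l|) ^ 2 ≤ ((k:ℝ) * δ) ^ 2 := by
      calc (∑ l ∈ range k, |w l - w' l|) ^ 2 ≤ (k:ℝ) * ∑ l ∈ range k, (w l - w' l) ^ 2 := hcs
        _ ≤ (k:ℝ) * δ ^ 2 := mul_le_mul_of_nonneg_left hw2 hkR0
        _ ≤ ((k:ℝ) * δ) ^ 2 := by nlinarith [hkR, hδ0, sq_nonneg δ]
    have h2 : (0:ℝ) ≤ ∑ l ∈ range k, |w l - w' l| := sum_nonneg fun l _ => abs_nonneg _
    nlinarith [h1, h2, mul_nonneg hkR0 hδ0]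
  have hsd : ∀ j, j ≤ k →
      |(∑ l ∈ range j, w l) - (∑ l ∈ range j, w' l)| ≤ (k:ℝ) * δ := by
    intro j hj
    rw [← sum_sub_distrib]
    calc |∑ l ∈ range j, (w l - w' l)| ≤ ∑ l ∈ range j, |w l - w' l| :=
          abs_sum_le_sum_abs _ _
      _ ≤ ∑ l ∈ range k, |w l - w' l| :=
          sum_le_sum_of_subset_of_nonneg (range_subset_range.mpr hj) fun _ _ _ => abs_nonneg _
      _ ≤ (k:ℝ) * δ := habsw
  -- expectations of interval indicators of ν
  have hindm : ∀ (S : Set ℝ), MeasurableSet S →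
      Measurable (fun x => S.indicator (fun _ => (1:ℝ)) (ν x)) := fun S hS =>
    (measurable_const.indicator hS).comp hνmeas
  have hIndInt : ∀ S : Set ℝ, MeasurableSet S →
      Integrable (fun x => S.indicator (fun _ => (1:ℝ)) (ν x)) P := by
    intro S hS
    refine Integrable.mono' (integrable_const 1) (hindm S hS).aestronglyMeasurable
      (Filter.Eventually.of_forall fun x => ?_)
    rw [Real.norm_eq_abs, abs_of_nonneg (Set.indicator_nonneg (fun _ _ => zero_le_one) _)]
    rcases ind_zero_or_one S (ν x) with h | h <;> rw [h] <;> norm_num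
  have hmapICO : ∀ c d : ℝ, c ≤ d →
      ∫ x, (Set.Ico c d).indicator (fun _ => (1:ℝ)) (ν x) ∂P ≤ d - c := by
    intro c d hcd
    have hm : Measurable ((Set.Ico c d).indicator (fun _ => (1:ℝ))) :=
      measurable_const.indicator measurableSet_Ico
    rw [← integral_map hνmeas.aemeasurable hm.aestronglyMeasurable, hνunif,
      integral_indicator_const (1:ℝ) measurableSet_Ico]
    simp only [smul_eq_mul, mul_one]
    have h1 : (volume.restrict (Set.Icc (0:ℝ) 1)) (Set.Ico c d) ≤ ENNReal.ofReal (d - c) := by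
      rw [Measure.restrict_apply measurableSet_Ico]
      refine le_trans (measure_mono Set.inter_subset_left) ?_
      rw [Real.volume_Ico]
    exact ENNReal.toReal_le_of_le_ofReal (by linarith) h1
  -- the two pieces of the decomposition
  obtain ⟨T, hTdef⟩ : ∃ T : Ω → ℝ, T = fun x => ∑ j ∈ range k,
      (Set.indicator (Set.Ico (∑ l ∈ range j, w l) (∑ l ∈ range (j+1), w l))
          (fun _ => (1:ℝ)) (ν x)
        - Set.indicator (Set.Ico (∑ l ∈ range j, w' l) (∑ l ∈ range (j+1), w' l))
          (fun _ => (1:ℝ)) (ν x)) * (μ j + σ j * Z j x) := ⟨_, rfl⟩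
  obtain ⟨U, hUdef⟩ : ∃ U : Ω → ℝ, U = fun x => ∑ j ∈ range k,
      Set.indicator (Set.Ico (∑ l ∈ range j, w' l) (∑ l ∈ range (j+1), w' l))
          (fun _ => (1:ℝ)) (ν x)
        * ((μ j - μ' j) + (σ j - σ' j) * Z j x) := ⟨_, rfl⟩
  have hFTU : ∀ x : Ω,
      ((∑ j ∈ range k,
            Set.indicator (Set.Ico (∑ l ∈ range j, w l) (∑ l ∈ range (j+1), w l))
              (fun _ => (1:ℝ)) (ν x) * (μ j + σ j * Z j x))
          - ∑ j ∈ range k,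
            Set.indicator (Set.Ico (∑ l ∈ range j, w' l) (∑ l ∈ range (j+1), w' l))
              (fun _ => (1:ℝ)) (ν x) * (μ' j + σ' j * Z j x))
        = T x + U x := by
    intro x
    rw [hTdef, hUdef]
    rw [← sum_sub_distrib, ← sum_add_distrib]
    exact sum_congr rfl fun j _ => by ring
  -- indicator sums are at most one
  have hmono_w : ∀ j, j < k → (∑ l ∈ range j, w l) ≤ ∑ l ∈ range (j+1), w l := by
    intro j hj; rw [sum_range_succ]; linarith [hw0 j hj]
  have hmono_w' : ∀ j, j < k → (∑ l ∈ range j, w' l) ≤ ∑ l ∈ range (j+1), w' l := by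
    intro j hj; rw [sum_range_succ]; linarith [hw'0 j hj]
  have hsumind_w : ∀ t : ℝ, ∑ j ∈ range k,
      Set.indicator (Set.Ico (∑ l ∈ range j, w l) (∑ l ∈ range (j+1), w l))
        (fun _ => (1:ℝ)) t ≤ 1 :=
    fun t => sum_ico_indicator_le_one (fun j => ∑ l ∈ range j, w l) k hmono_w t
  have hsumind_w' : ∀ t : ℝ, ∑ j ∈ range k,
      Set.indicator (Set.Ico (∑ l ∈ range j, w' l) (∑ l ∈ range (j+1), w' l))
        (fun _ => (1:ℝ)) t ≤ 1 :=
    fun t => sum_ico_indicator_le_one (fun j => ∑ l ∈ range j, w' l) k hmono_w' t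
  -- pointwise bound for T
  have hT2pt : ∀ x : Ω, T x ^ 2 ≤ 2 * ∑ j ∈ range k,
      (Set.indicator (Set.Ico (∑ l ∈ range j, w l) (∑ l ∈ range (j+1), w l))
          (fun _ => (1:ℝ)) (ν x)
        - Set.indicator (Set.Ico (∑ l ∈ range j, w' l) (∑ l ∈ range (j+1), w' l))
          (fun _ => (1:ℝ)) (ν x)) ^ 2 * (μ j + σ j * Z j x) ^ 2 := by
    intro x
    rw [hTdef]
    refine sum_mul_sq_bound k _ _ (fun j _ => ?_) ?_
    · rcases ind_zero_or_one (Set.Ico (∑ l ∈ range j, w l) (∑ l ∈ range (j+1), w l)) (ν x)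
        with h1 | h1 <;>
      rcases ind_zero_or_one (Set.Ico (∑ l ∈ range j, w' l) (∑ l ∈ range (j+1), w' l)) (ν x)
        with h2 | h2 <;> rw [h1, h2] <;> norm_num
    · calc ∑ j ∈ range k,
          (Set.indicator (Set.Ico (∑ l ∈ range j, w l) (∑ l ∈ range (j+1), w l))
              (fun _ => (1:ℝ)) (ν x)
            - Set.indicator (Set.Ico (∑ l ∈ range j, w' l) (∑ l ∈ range (j+1), w' l))
              (fun _ => (1:ℝ)) (ν x)) ^ 2
          ≤ ∑ j ∈ range k,
            (Set.indicator (Set.Ico (∑ l ∈ range j, w l) (∑ l ∈ range (j+1), w l))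
              (fun _ => (1:ℝ)) (ν x)
            + Set.indicator (Set.Ico (∑ l ∈ range j, w' l) (∑ l ∈ range (j+1), w' l))
              (fun _ => (1:ℝ)) (ν x)) := by
            refine sum_le_sum fun j _ => ?_
            rcases ind_zero_or_one (Set.Ico (∑ l ∈ range j, w l) (∑ l ∈ range (j+1), w l)) (ν x)
              with h1 | h1 <;>
            rcases ind_zero_or_one (Set.Ico (∑ l ∈ range j, w' l) (∑ l ∈ range (j+1), w' l)) (ν x)
              with h2 | h2 <;> rw [h1, h2] <;> norm_num
        _ ≤ 2 := by
            rw [sum_add_distrib]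
            linarith [hsumind_w (ν x), hsumind_w' (ν x)]
  -- pointwise bound for U
  have hU2pt : ∀ x : Ω, U x ^ 2 ≤ ∑ j ∈ range k,
      ((μ j - μ' j) + (σ j - σ' j) * Z j x) ^ 2 := by
    intro x
    rw [hUdef]
    refine sum_ind_mul_sq_bound k _ _ (fun j _ => ?_) (hsumind_w' (ν x))
    exact ind_zero_or_one _ _
  -- moment bounds
  have hXsq_int : ∀ j, j < k → Integrable (fun x => (μ j + σ j * Z j x) ^ 2) P :=
    fun j hj => affine_sq_int P (Z j) (hZmeas j) (hZint j hj) (μ j) (σ j)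
  have hXsq_bd : ∀ j, j < k →
      ∫ x, (μ j + σ j * Z j x) ^ 2 ∂P ≤ 2 * μbar ^ 2 + 2 * σbar ^ 2 * CZ ^ 2 := by
    intro j hj
    have h1 := affine_sq_bound P (Z j) (hZmeas j) (hZint j hj) (μ j) (σ j)
    have h2 : (μ j) ^ 2 ≤ μbar ^ 2 := by nlinarith [hμ j hj, abs_nonneg (μ j), sq_abs (μ j)]
    have h3 : (σ j) ^ 2 ≤ σbar ^ 2 := by nlinarith [hσ j hj, abs_nonneg (σ j), sq_abs (σ j)]
    have h4 : (0:ℝ) ≤ ∫ x, Z j x ^ 2 ∂P := integral_nonneg fun x => sq_nonneg _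
    have h5 := hZmom j hj
    nlinarith [mul_le_mul h3 h5 h4 (by positivity : (0:ℝ) ≤ σbar ^ 2)]
  -- integrability of the T summands, and of T²
  have htermint : ∀ j, j < k → Integrable (fun x =>
      (Set.indicator (Set.Ico (∑ l ∈ range j, w l) (∑ l ∈ range (j+1), w l))
          (fun _ => (1:ℝ)) (ν x)
        - Set.indicator (Set.Ico (∑ l ∈ range j, w' l) (∑ l ∈ range (j+1), w' l))
          (fun _ => (1:ℝ)) (ν x)) ^ 2 * (μ j + σ j * Z j x) ^ 2) P := by
    intro j hj
    refine Integrable.mono' (hXsq_int j hj)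
      ((((hindm _ measurableSet_Ico).sub (hindm _ measurableSet_Ico)).pow_const 2).mul
        ((measurable_const.add (measurable_const.mul (hZmeas j))).pow_const 2)).aestronglyMeasurable
      (Filter.Eventually.of_forall fun x => ?_)
    rw [Real.norm_eq_abs, abs_of_nonneg (mul_nonneg (sq_nonneg _) (sq_nonneg _))]
    have hle1 : (Set.indicator (Set.Ico (∑ l ∈ range j, w l) (∑ l ∈ range (j+1), w l))
          (fun _ => (1:ℝ)) (ν x)
        - Set.indicator (Set.Ico (∑ l ∈ range j, w' l) (∑ l ∈ range (j+1), w' l))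
          (fun _ => (1:ℝ)) (ν x)) ^ 2 ≤ 1 := by
      rcases ind_zero_or_one (Set.Ico (∑ l ∈ range j, w l) (∑ l ∈ range (j+1), w l)) (ν x)
        with h1 | h1 <;>
      rcases ind_zero_or_one (Set.Ico (∑ l ∈ range j, w' l) (∑ l ∈ range (j+1), w' l)) (ν x)
        with h2 | h2 <;> rw [h1, h2] <;> norm_num
    nlinarith [sq_nonneg (μ j + σ j * Z j x), sq_nonneg
      (Set.indicator (Set.Ico (∑ l ∈ range j, w l) (∑ l ∈ range (j+1), w l))
          (fun _ => (1:ℝ)) (ν x)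
        - Set.indicator (Set.Ico (∑ l ∈ range j, w' l) (∑ l ∈ range (j+1), w' l))
          (fun _ => (1:ℝ)) (ν x))]
  have hbound_int : Integrable (fun x => ∑ j ∈ range k,
      (Set.indicator (Set.Ico (∑ l ∈ range j, w l) (∑ l ∈ range (j+1), w l))
          (fun _ => (1:ℝ)) (ν x)
        - Set.indicator (Set.Ico (∑ l ∈ range j, w' l) (∑ l ∈ range (j+1), w' l))
          (fun _ => (1:ℝ)) (ν x)) ^ 2 * (μ j + σ j * Z j x) ^ 2) P :=
    integrable_finset_sum _ fun j hj => htermint j (mem_range.mp hj)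
  have hTmeas : Measurable T := by
    rw [hTdef]
    exact Finset.measurable_sum _ fun j _ =>
      (((hindm _ measurableSet_Ico).sub (hindm _ measurableSet_Ico)).mul
        (measurable_const.add (measurable_const.mul (hZmeas j))))
  have hTsq_int : Integrable (fun x => T x ^ 2) P := by
    refine Integrable.mono' (hbound_int.const_mul 2)
      ((hTmeas.pow_const 2).aestronglyMeasurable)
      (Filter.Eventually.of_forall fun x => ?_)
    rw [Real.norm_eq_abs, abs_of_nonneg (sq_nonneg _)]
    exact hT2pt x
  -- independence factorization and bound for each T summand
  have hterm : ∀ j, j < k → ∫ x,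
      (Set.indicator (Set.Ico (∑ l ∈ range j, w l) (∑ l ∈ range (j+1), w l))
          (fun _ => (1:ℝ)) (ν x)
        - Set.indicator (Set.Ico (∑ l ∈ range j, w' l) (∑ l ∈ range (j+1), w' l))
          (fun _ => (1:ℝ)) (ν x)) ^ 2 * (μ j + σ j * Z j x) ^ 2 ∂P
      ≤ (2 * ((k:ℝ) * δ)) * (2 * μbar ^ 2 + 2 * σbar ^ 2 * CZ ^ 2) := by
    intro j hj
    obtain ⟨G, hGdef⟩ : ∃ G : ℝ → ℝ, G = fun t =>
      (Set.indicator (Set.Ico (∑ l ∈ range j, w l) (∑ l ∈ range (j+1), w l))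
          (fun _ => (1:ℝ)) t
        - Set.indicator (Set.Ico (∑ l ∈ range j, w' l) (∑ l ∈ range (j+1), w' l))
          (fun _ => (1:ℝ)) t) ^ 2 := ⟨_, rfl⟩
    obtain ⟨Ψ, hΨdef⟩ : ∃ Ψ : (Fin k → ℝ) → ℝ,
      Ψ = fun v => (μ j + σ j * v ⟨j, hj⟩) ^ 2 := ⟨_, rfl⟩
    have hGmeas : Measurable G := by
      rw [hGdef]
      exact ((measurable_const.indicator measurableSet_Ico).sub
        (measurable_const.indicator measurableSet_Ico)).pow_const 2
    have hΨmeas : Measurable Ψ := by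
      rw [hΨdef]
      exact (measurable_const.add (measurable_const.mul (measurable_pi_apply _))).pow_const 2
    have hGνmeas : Measurable (fun x => G (ν x)) := hGmeas.comp hνmeas
    have hΨZmeas : Measurable (fun x => Ψ (fun i : Fin k => Z i x)) :=
      hΨmeas.comp (measurable_pi_lambda _ fun i => hZmeas i)
    have hind2 : IndepFun (fun x => G (ν x)) (fun x => Ψ (fun i : Fin k => Z i x)) P :=
      (hindep.comp hΨmeas hGmeas).symm
    have heq := hind2.integral_mul_eq_mul_integral hGνmeas.aestronglyMeasurable hΨZmeas.aestronglyMeasurable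
    have heq2 : ∫ x,
        (Set.indicator (Set.Ico (∑ l ∈ range j, w l) (∑ l ∈ range (j+1), w l))
            (fun _ => (1:ℝ)) (ν x)
          - Set.indicator (Set.Ico (∑ l ∈ range j, w' l) (∑ l ∈ range (j+1), w' l))
            (fun _ => (1:ℝ)) (ν x)) ^ 2 * (μ j + σ j * Z j x) ^ 2 ∂P
        = (∫ x, G (ν x) ∂P) * ∫ x, (μ j + σ j * Z j x) ^ 2 ∂P := by
      calc ∫ x,
          (Set.indicator (Set.Ico (∑ l ∈ range j, w l) (∑ l ∈ range (j+1), w l))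
              (fun _ => (1:ℝ)) (ν x)
            - Set.indicator (Set.Ico (∑ l ∈ range j, w' l) (∑ l ∈ range (j+1), w' l))
              (fun _ => (1:ℝ)) (ν x)) ^ 2 * (μ j + σ j * Z j x) ^ 2 ∂P
          = integral P ((fun x => G (ν x)) * fun x => Ψ fun i : Fin k => Z i x) := by
            refine integral_congr_ae (Filter.Eventually.of_forall fun x => ?_)
            simp [Pi.mul_apply, hGdef, hΨdef]
        _ = (∫ x, G (ν x) ∂P) * ∫ x, Ψ (fun i : Fin k => Z i x) ∂P := heq
        _ = (∫ x, G (ν x) ∂P) * ∫ x, (μ j + σ j * Z j x) ^ 2 ∂P := by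
            congr 1
            refine integral_congr_ae (Filter.Eventually.of_forall fun x => ?_)
            simp [hΨdef]
    rw [heq2]
    have hGνint : Integrable (fun x => G (ν x)) P := by
      refine Integrable.mono' (integrable_const 1) hGνmeas.aestronglyMeasurable
        (Filter.Eventually.of_forall fun x => ?_)
      simp only [Real.norm_eq_abs, hGdef]
      rw [abs_of_nonneg (sq_nonneg _)]
      rcases ind_zero_or_one (Set.Ico (∑ l ∈ range j, w l) (∑ l ∈ range (j+1), w l)) (ν x)
        with h1 | h1 <;>
      rcases ind_zero_or_one (Set.Ico (∑ l ∈ range j, w' l) (∑ l ∈ range (j+1), w' l)) (ν x)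
        with h2 | h2 <;> rw [h1, h2] <;> norm_num
    have hGle : ∫ x, G (ν x) ∂P ≤ 2 * ((k:ℝ) * δ) := by
      obtain ⟨c1, hc1⟩ : ∃ c1 : ℝ, c1 = min (∑ l ∈ range j, w l) (∑ l ∈ range j, w' l) :=
        ⟨_, rfl⟩
      obtain ⟨d1, hd1⟩ : ∃ d1 : ℝ, d1 = max (∑ l ∈ range j, w l) (∑ l ∈ range j, w' l) :=
        ⟨_, rfl⟩
      obtain ⟨c2, hc2⟩ : ∃ c2 : ℝ,
        c2 = min (∑ l ∈ range (j+1), w l) (∑ l ∈ range (j+1), w' l) := ⟨_, rfl⟩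
      obtain ⟨d2, hd2⟩ : ∃ d2 : ℝ,
        d2 = max (∑ l ∈ range (j+1), w l) (∑ l ∈ range (j+1), w' l) := ⟨_, rfl⟩
      have hpt : ∀ x : Ω, G (ν x) ≤ (Set.Ico c1 d1).indicator (fun _ => (1:ℝ)) (ν x)
          + (Set.Ico c2 d2).indicator (fun _ => (1:ℝ)) (ν x) := by
        intro x
        rw [hGdef, hc1, hd1, hc2, hd2]
        exact ind_sub_sq_le _ _ _ _ (ν x)
      calc ∫ x, G (ν x) ∂P
          ≤ ∫ x, ((Set.Ico c1 d1).indicator (fun _ => (1:ℝ)) (ν x)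
            + (Set.Ico c2 d2).indicator (fun _ => (1:ℝ)) (ν x)) ∂P :=
            integral_mono hGνint ((hIndInt _ measurableSet_Ico).add
              (hIndInt _ measurableSet_Ico)) hpt
        _ = (∫ x, (Set.Ico c1 d1).indicator (fun _ => (1:ℝ)) (ν x) ∂P)
            + ∫ x, (Set.Ico c2 d2).indicator (fun _ => (1:ℝ)) (ν x) ∂P :=
            integral_add (hIndInt _ measurableSet_Ico) (hIndInt _ measurableSet_Ico)
        _ ≤ (d1 - c1) + (d2 - c2) :=
            add_le_add (hmapICO c1 d1 (by rw [hc1, hd1]; exact min_le_max))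
              (hmapICO c2 d2 (by rw [hc2, hd2]; exact min_le_max))
        _ ≤ (k:ℝ) * δ + (k:ℝ) * δ := by
            have e1 : d1 - c1 = |(∑ l ∈ range j, w l) - (∑ l ∈ range j, w' l)| := by
              rw [hd1, hc1, max_sub_min_eq_abs, abs_sub_comm]
            have e2 : d2 - c2 = |(∑ l ∈ range (j+1), w l) - (∑ l ∈ range (j+1), w' l)| := by
              rw [hd2, hc2, max_sub_min_eq_abs, abs_sub_comm]
            rw [e1, e2]
            exact add_le_add (hsd j (le_of_lt hj)) (hsd (j+1) hj)
        _ = 2 * ((k:ℝ) * δ) := by ring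
    have hGnn : 0 ≤ ∫ x, G (ν x) ∂P := by
      refine integral_nonneg fun x => ?_
      rw [hGdef]; exact sq_nonneg _
    have hXnn : 0 ≤ ∫ x, (μ j + σ j * Z j x) ^ 2 ∂P := integral_nonneg fun x => sq_nonneg _
    exact mul_le_mul hGle (hXsq_bd j hj) hXnn (by positivity)
  -- the bound for ∫ T²
  have hTint : ∫ x, T x ^ 2 ∂P
      ≤ 2 * ((k:ℝ) * ((2 * ((k:ℝ) * δ)) * (2 * μbar ^ 2 + 2 * σbar ^ 2 * CZ ^ 2))) := by
    calc ∫ x, T x ^ 2 ∂P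
        ≤ ∫ x, 2 * ∑ j ∈ range k,
            (Set.indicator (Set.Ico (∑ l ∈ range j, w l) (∑ l ∈ range (j+1), w l))
                (fun _ => (1:ℝ)) (ν x)
              - Set.indicator (Set.Ico (∑ l ∈ range j, w' l) (∑ l ∈ range (j+1), w' l))
                (fun _ => (1:ℝ)) (ν x)) ^ 2 * (μ j + σ j * Z j x) ^ 2 ∂P :=
          integral_mono hTsq_int (hbound_int.const_mul 2) hT2pt
      _ = 2 * ∑ j ∈ range k, ∫ x,
            (Set.indicator (Set.Ico (∑ l ∈ range j, w l) (∑ l ∈ range (j+1), w l))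
                (fun _ => (1:ℝ)) (ν x)
              - Set.indicator (Set.Ico (∑ l ∈ range j, w' l) (∑ l ∈ range (j+1), w' l))
                (fun _ => (1:ℝ)) (ν x)) ^ 2 * (μ j + σ j * Z j x) ^ 2 ∂P := by
          rw [integral_const_mul, integral_finset_sum _ fun j hj =>
            htermint j (mem_range.mp hj)]
      _ ≤ 2 * ∑ _j ∈ range k, (2 * ((k:ℝ) * δ)) * (2 * μbar ^ 2 + 2 * σbar ^ 2 * CZ ^ 2) := by
          refine mul_le_mul_of_nonneg_left (sum_le_sum fun j hj => hterm j (mem_range.mp hj))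
            (by norm_num)
      _ = 2 * ((k:ℝ) * ((2 * ((k:ℝ) * δ)) * (2 * μbar ^ 2 + 2 * σbar ^ 2 * CZ ^ 2))) := by
          rw [sum_const, card_range, nsmul_eq_mul]
  -- U side
  have hΔint : ∀ j, j < k →
      Integrable (fun x => ((μ j - μ' j) + (σ j - σ' j) * Z j x) ^ 2) P :=
    fun j hj => affine_sq_int P (Z j) (hZmeas j) (hZint j hj) _ _
  have hUbnd_int : Integrable
      (fun x => ∑ j ∈ range k, ((μ j - μ' j) + (σ j - σ' j) * Z j x) ^ 2) P :=
    integrable_finset_sum _ fun j hj => hΔint j (mem_range.mp hj)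
  have hUmeas : Measurable U := by
    rw [hUdef]
    exact Finset.measurable_sum _ fun j _ =>
      (hindm _ measurableSet_Ico).mul (measurable_const.add (measurable_const.mul (hZmeas j)))
  have hUsq_int : Integrable (fun x => U x ^ 2) P := by
    refine Integrable.mono' hUbnd_int ((hUmeas.pow_const 2).aestronglyMeasurable)
      (Filter.Eventually.of_forall fun x => ?_)
    rw [Real.norm_eq_abs, abs_of_nonneg (sq_nonneg _)]
    exact hU2pt x
  have hUint : ∫ x, U x ^ 2 ∂P ≤ 2 * δ ^ 2 + 2 * CZ ^ 2 * δ ^ 2 := by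
    calc ∫ x, U x ^ 2 ∂P
        ≤ ∫ x, ∑ j ∈ range k, ((μ j - μ' j) + (σ j - σ' j) * Z j x) ^ 2 ∂P :=
          integral_mono hUsq_int hUbnd_int hU2pt
      _ = ∑ j ∈ range k, ∫ x, ((μ j - μ' j) + (σ j - σ' j) * Z j x) ^ 2 ∂P :=
          integral_finset_sum _ fun j hj => hΔint j (mem_range.mp hj)
      _ ≤ ∑ j ∈ range k, (2 * (μ j - μ' j) ^ 2 + (2 * CZ ^ 2) * (σ j - σ' j) ^ 2) := by
          refine sum_le_sum fun j hj => ?_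
          have h1 := affine_sq_bound P (Z j) (hZmeas j) (hZint j (mem_range.mp hj))
            (μ j - μ' j) (σ j - σ' j)
          have h5 := hZmom j (mem_range.mp hj)
          nlinarith [mul_le_mul_of_nonneg_left h5 (sq_nonneg (σ j - σ' j))]
      _ = 2 * (∑ j ∈ range k, (μ j - μ' j) ^ 2)
          + (2 * CZ ^ 2) * ∑ j ∈ range k, (σ j - σ' j) ^ 2 := by
          rw [sum_add_distrib, ← mul_sum, ← mul_sum]
      _ ≤ 2 * δ ^ 2 + 2 * CZ ^ 2 * δ ^ 2 := by
          have h6 := mul_le_mul_of_nonneg_left hμ2 (by norm_num : (0:ℝ) ≤ 2)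
          have h7 := mul_le_mul_of_nonneg_left hσ2 (by positivity : (0:ℝ) ≤ 2 * CZ ^ 2)
          linarith
  -- final assembly
  have hA : Real.sqrt (∫ x, T x ^ 2 ∂P)
      ≤ 2 * Real.sqrt 2 * (1 + CZ) * (μbar + σbar) * (k:ℝ) * Real.sqrt δ := by
    have hμσ0 : (0:ℝ) ≤ μbar + σbar := by linarith
    have hB1nn : (0:ℝ) ≤ 2 * Real.sqrt 2 * (1 + CZ) * (μbar + σbar) * (k:ℝ) * Real.sqrt δ :=
      mul_nonneg (mul_nonneg (mul_nonneg (mul_nonneg (by positivity) h1CZ) hμσ0) hkR0)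
        (Real.sqrt_nonneg δ)
    have hBsq : (2 * Real.sqrt 2 * (1 + CZ) * (μbar + σbar) * (k:ℝ) * Real.sqrt δ) ^ 2
        = 8 * (1 + CZ) ^ 2 * (μbar + σbar) ^ 2 * (k:ℝ) ^ 2 * δ := by
      have h2 : Real.sqrt 2 ^ 2 = 2 := Real.sq_sqrt (by norm_num)
      have hδs : Real.sqrt δ ^ 2 = δ := Real.sq_sqrt hδ0
      calc (2 * Real.sqrt 2 * (1 + CZ) * (μbar + σbar) * (k:ℝ) * Real.sqrt δ) ^ 2
          = 4 * (Real.sqrt 2 ^ 2) * ((1 + CZ) ^ 2 * (μbar + σbar) ^ 2 * (k:ℝ) ^ 2)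
            * (Real.sqrt δ ^ 2) := by ring
        _ = 8 * (1 + CZ) ^ 2 * (μbar + σbar) ^ 2 * (k:ℝ) ^ 2 * δ := by rw [h2, hδs]; ring
    have hcoef : μbar ^ 2 + σbar ^ 2 * CZ ^ 2 ≤ (1 + CZ) ^ 2 * (μbar + σbar) ^ 2 := by
      nlinarith [mul_nonneg hμbar0 hσbar0, mul_nonneg (mul_nonneg hμbar0 hσbar0) hCZ,
        mul_nonneg (mul_nonneg (mul_nonneg hμbar0 hσbar0) hCZ) hCZ,
        mul_nonneg (mul_nonneg hμbar0 hμbar0) hCZ, mul_nonneg (mul_nonneg hσbar0 hσbar0) hCZ,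
        sq_nonneg μbar, sq_nonneg σbar, hCZ, mul_nonneg (mul_nonneg (mul_nonneg hμbar0 hμbar0) hCZ) hCZ]
    have h1 : ∫ x, T x ^ 2 ∂P
        ≤ (2 * Real.sqrt 2 * (1 + CZ) * (μbar + σbar) * (k:ℝ) * Real.sqrt δ) ^ 2 := by
      rw [hBsq]
      calc ∫ x, T x ^ 2 ∂P
          ≤ 2 * ((k:ℝ) * ((2 * ((k:ℝ) * δ)) * (2 * μbar ^ 2 + 2 * σbar ^ 2 * CZ ^ 2))) := hTint
        _ = 8 * (k:ℝ) ^ 2 * δ * (μbar ^ 2 + σbar ^ 2 * CZ ^ 2) := by ring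
        _ ≤ 8 * (k:ℝ) ^ 2 * δ * ((1 + CZ) ^ 2 * (μbar + σbar) ^ 2) :=
            mul_le_mul_of_nonneg_left hcoef (by positivity)
        _ = 8 * (1 + CZ) ^ 2 * (μbar + σbar) ^ 2 * (k:ℝ) ^ 2 * δ := by ring
    calc Real.sqrt (∫ x, T x ^ 2 ∂P)
        ≤ Real.sqrt ((2 * Real.sqrt 2 * (1 + CZ) * (μbar + σbar) * (k:ℝ) * Real.sqrt δ) ^ 2) :=
          Real.sqrt_le_sqrt h1
      _ = 2 * Real.sqrt 2 * (1 + CZ) * (μbar + σbar) * (k:ℝ) * Real.sqrt δ :=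
          Real.sqrt_sq hB1nn
  have hB : Real.sqrt (∫ x, U x ^ 2 ∂P) ≤ Real.sqrt 2 * (1 + CZ) * δ := by
    have hB2nn : (0:ℝ) ≤ Real.sqrt 2 * (1 + CZ) * δ :=
      mul_nonneg (mul_nonneg (Real.sqrt_nonneg 2) h1CZ) hδ0
    have h1 : ∫ x, U x ^ 2 ∂P ≤ (Real.sqrt 2 * (1 + CZ) * δ) ^ 2 := by
      have hBsq : (Real.sqrt 2 * (1 + CZ) * δ) ^ 2 = 2 * (1 + CZ) ^ 2 * δ ^ 2 := by
        have h2 : Real.sqrt 2 ^ 2 = 2 := Real.sq_sqrt (by norm_num)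
        calc (Real.sqrt 2 * (1 + CZ) * δ) ^ 2
            = (Real.sqrt 2 ^ 2) * ((1 + CZ) ^ 2 * δ ^ 2) := by ring
          _ = 2 * (1 + CZ) ^ 2 * δ ^ 2 := by rw [h2]; ring
      rw [hBsq]
      nlinarith [hUint, mul_nonneg hCZ (sq_nonneg δ), sq_nonneg δ, hCZ]
    calc Real.sqrt (∫ x, U x ^ 2 ∂P) ≤ Real.sqrt ((Real.sqrt 2 * (1 + CZ) * δ) ^ 2) :=
          Real.sqrt_le_sqrt h1
      _ = Real.sqrt 2 * (1 + CZ) * δ := Real.sqrt_sq hB2nn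
  have key := sqrt_integral_add_sq_le (μ := P) T U hTmeas.aestronglyMeasurable
    hUmeas.aestronglyMeasurable hTsq_int hUsq_int
  have harith : 2 * Real.sqrt 2 * (1 + CZ) * (μbar + σbar) * (k:ℝ) * Real.sqrt δ
      + Real.sqrt 2 * (1 + CZ) * δ
      ≤ 2 * Real.sqrt 2 * (1 + CZ) * (1 + μbar + σbar) * (1 + (k:ℝ)) * Real.sqrt δ := by
    have hδle : δ ≤ Real.sqrt δ := by
      nlinarith [Real.sq_sqrt hδ0, Real.sqrt_nonneg δ, hsqδ]
    have hkey : 2 * (μbar + σbar) * (k:ℝ) + 1 ≤ 2 * (1 + μbar + σbar) * (1 + (k:ℝ)) := by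
      nlinarith [hμbar0, hσbar0, hkR]
    have h2 : (0:ℝ) ≤ Real.sqrt 2 * (1 + CZ) * Real.sqrt δ :=
      mul_nonneg (mul_nonneg (Real.sqrt_nonneg 2) h1CZ) (Real.sqrt_nonneg δ)
    have h3 : Real.sqrt 2 * (1 + CZ) * δ ≤ Real.sqrt 2 * (1 + CZ) * Real.sqrt δ :=
      mul_le_mul_of_nonneg_left hδle (mul_nonneg (Real.sqrt_nonneg 2) h1CZ)
    calc 2 * Real.sqrt 2 * (1 + CZ) * (μbar + σbar) * (k:ℝ) * Real.sqrt δ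
        + Real.sqrt 2 * (1 + CZ) * δ
        ≤ 2 * Real.sqrt 2 * (1 + CZ) * (μbar + σbar) * (k:ℝ) * Real.sqrt δ
          + Real.sqrt 2 * (1 + CZ) * Real.sqrt δ := by linarith
      _ = (Real.sqrt 2 * (1 + CZ) * Real.sqrt δ) * (2 * (μbar + σbar) * (k:ℝ) + 1) := by ring
      _ ≤ (Real.sqrt 2 * (1 + CZ) * Real.sqrt δ) * (2 * (1 + μbar + σbar) * (1 + (k:ℝ))) :=
          mul_le_mul_of_nonneg_left hkey h2
      _ = 2 * Real.sqrt 2 * (1 + CZ) * (1 + μbar + σbar) * (1 + (k:ℝ)) * Real.sqrt δ := by ring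
  simp only [hFTU]
  calc Real.sqrt (∫ x, (T x + U x) ^ 2 ∂P)
      ≤ Real.sqrt (∫ x, T x ^ 2 ∂P) + Real.sqrt (∫ x, U x ^ 2 ∂P) := key
    _ ≤ 2 * Real.sqrt 2 * (1 + CZ) * (μbar + σbar) * (k:ℝ) * Real.sqrt δ
        + Real.sqrt 2 * (1 + CZ) * δ := add_le_add hA hB
    _ ≤ 2 * Real.sqrt 2 * (1 + CZ) * (1 + μbar + σbar) * (1 + (k:ℝ)) * Real.sqrt δ := harith
end

section
/- Let 0 < ξ̲ ≤ ξ. The simulated left-tail draw has a finite second moment satisfying the explicit bound ∫₀¹ ((1/v) − 1)^{2/(2+ξ)} dv ≤ (2+ξ)/ξ ≤ (2+ξ̲)/ξ̲. In particular, E[e_ξ²] is finite and bounded uniformly over all ξ ≥ ξ̲ by a constant depending only on ξ̲. -/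
open MeasureTheory

/-- The simulated left-tail draw has a finite second moment, bounded by `(2+ξ)/ξ`,
uniformly over `ξ ≥ ξ̲` by `(2+ξ̲)/ξ̲`. -/
theorem stmt_4 (ξl ξ : ℝ) (hξl : 0 < ξl) (hle : ξl ≤ ξ) :
    IntegrableOn (fun v : ℝ => (1 / v - 1) ^ ((2:ℝ) / (2 + ξ))) (Set.Ioo 0 1) volume
    ∧ (∫ v in Set.Ioo (0:ℝ) 1, (1 / v - 1) ^ ((2:ℝ) / (2 + ξ))) ≤ (2 + ξ) / ξ
    ∧ (2 + ξ) / ξ ≤ (2 + ξl) / ξl := by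
  have hξ : 0 < ξ := lt_of_lt_of_le hξl hle
  set p : ℝ := 2 / (2 + ξ) with hp
  have h2ξ : (0:ℝ) < 2 + ξ := by linarith
  have hp0 : 0 < p := by positivity
  have hp1 : p < 1 := by
    rw [hp, div_lt_one h2ξ]; linarith
  -- pointwise bound
  have hbd : ∀ v ∈ Set.Ioo (0:ℝ) 1, (1 / v - 1) ^ p ≤ v ^ (-p) := by
    intro v hv
    have hv0 : 0 < v := hv.1
    have h1 : (0:ℝ) ≤ 1 / v - 1 := by
      rw [sub_nonneg, le_div_iff₀ hv0, one_mul]; exact hv.2.le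
    have h2 : 1 / v - 1 ≤ 1 / v := by linarith
    calc (1 / v - 1) ^ p ≤ (1 / v) ^ p := Real.rpow_le_rpow h1 h2 hp0.le
      _ = v ^ (-p) := by
          rw [one_div, Real.inv_rpow hv0.le, ← Real.rpow_neg hv0.le]
  -- integrability of bound
  have hint : IntegrableOn (fun v : ℝ => v ^ (-p)) (Set.Ioo 0 1) volume := by
    rw [intervalIntegral.integrableOn_Ioo_rpow_iff one_pos]
    linarith
  -- measurability
  have hmeas : AEStronglyMeasurable (fun v : ℝ => (1 / v - 1) ^ p)
      (volume.restrict (Set.Ioo (0:ℝ) 1)) := by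
    have hcont : ContinuousOn (fun v : ℝ => (1 / v - 1) ^ p) (Set.Ioo 0 1) := by
      apply ContinuousOn.rpow_const
      · exact (continuousOn_const.div continuousOn_id fun v hv => ne_of_gt hv.1).sub
          continuousOn_const
      · exact fun v hv => Or.inr hp0.le
    exact hcont.aestronglyMeasurable measurableSet_Ioo
  have hintf : IntegrableOn (fun v : ℝ => (1 / v - 1) ^ p) (Set.Ioo 0 1) volume := by
    refine Integrable.mono' hint hmeas ?_
    filter_upwards [ae_restrict_mem measurableSet_Ioo] with v hv
    rw [Real.norm_eq_abs, abs_of_nonneg (Real.rpow_nonneg ?_ _)]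
    · exact hbd v hv
    · rw [sub_nonneg, le_div_iff₀ hv.1, one_mul]; exact hv.2.le
  refine ⟨hintf, ?_, ?_⟩
  · have hmono : (∫ v in Set.Ioo (0:ℝ) 1, (1 / v - 1) ^ p)
        ≤ ∫ v in Set.Ioo (0:ℝ) 1, v ^ (-p) :=
      setIntegral_mono_on hintf hint measurableSet_Ioo hbd
    have hval : (∫ v in Set.Ioo (0:ℝ) 1, v ^ (-p)) = (2 + ξ) / ξ := by
      rw [← MeasureTheory.integral_Ioc_eq_integral_Ioo,
        ← intervalIntegral.integral_of_le (zero_le_one), integral_rpow (Or.inl (by linarith))]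
      rw [Real.one_rpow, Real.zero_rpow (ne_of_gt (by linarith))]
      have : -p + 1 = ξ / (2 + ξ) := by rw [hp]; linear_combination (-1:ℝ) * mul_inv_cancel₀ h2ξ.ne'
      rw [this]
      rw [sub_zero, one_div_div]
    linarith
  · rw [div_le_div_iff₀ hξ hξl]
    nlinarith
end

section
/- Let 0 < ξ̲ ≤ ξ̄ < ∞. There exists a finite constant C, depending only on ξ̲ and ξ̄, such that for all ξ₁, ξ₂ ∈ [ξ̲, ξ̄]: (∫₀¹ |T_{ξ₁}(v) − T_{ξ₂}(v)|² dv)^{1/2} ≤ C·|ξ₁ − ξ₂|. Equivalently, if ν is uniform on (0,1), the simulated left-tail draws are Lipschitz in the tail index in L²: (E|e_{ξ₁} − e_{ξ₂}|²)^{1/2} ≤ C|ξ₁ − ξ₂|. -/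
open MeasureTheory

private lemma neg_log_le_aux {η v : ℝ} (hη : 0 < η) (hv : 0 < v) :
    -Real.log v ≤ v ^ (-η) / η := by
  have h1 : Real.log (v ^ (-η)) ≤ v ^ (-η) - 1 :=
    Real.log_le_sub_one_of_pos (Real.rpow_pos_of_pos hv _)
  rw [Real.log_rpow hv] at h1
  rw [le_div_iff₀ hη]
  have h2 : 0 < v ^ (-η) := Real.rpow_pos_of_pos hv _
  nlinarith

private lemma sq_add_le_aux (k A B : ℝ) :
    (k * (A + B))^2 ≤ k^2 * 2 * (A^2 + B^2) := by
  nlinarith [sq_nonneg (k*(A - B))]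

set_option maxHeartbeats 2000000 in
/-- The simulated left-tail draws are Lipschitz in the tail index in `L²`,
uniformly over a compact range of tail indices. -/
theorem stmt_5 (ξl ξu : ℝ) (hξl : 0 < ξl) (hle : ξl ≤ ξu) :
    ∃ C : ℝ, 0 ≤ C ∧ ∀ ξ₁ ξ₂ : ℝ, ξ₁ ∈ Set.Icc ξl ξu → ξ₂ ∈ Set.Icc ξl ξu →
      Real.sqrt (∫ v in Set.Ioo (0:ℝ) 1,
          ((-((1 / v - 1) ^ ((1:ℝ) / (2 + ξ₁)))) -
            (-((1 / v - 1) ^ ((1:ℝ) / (2 + ξ₂))))) ^ 2)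
        ≤ C * |ξ₁ - ξ₂| := by
  have h2l : (0:ℝ) < 2 + ξl := by linarith
  have h2u : (0:ℝ) < 2 + ξu := by linarith
  set c : ℝ := 1 / (2 + ξu) with hc
  set d : ℝ := 1 / (2 + ξl) with hd
  have hc0 : 0 < c := by positivity
  have hcd : c ≤ d := one_div_le_one_div_of_le h2l (by linarith)
  have hd2 : d < 1/2 := by
    rw [hd, div_lt_div_iff₀ h2l (by norm_num)]; linarith
  set η : ℝ := (1/2 - d)/2 with hη
  have hη0 : 0 < η := by rw [hη]; linarith
  set s : ℝ := d + η with hs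
  have hs0 : 0 < s := by have := hc0.trans_le hcd; positivity
  have hs2 : 2 * s < 1 := by rw [hs, hη]; linarith
  set H : ℝ → ℝ := fun v => (2/η)^2 * 2 * (v ^ (-(2*s)) + (1-v) ^ (-(2*s))) with hH
  -- integrability of H on Ioo 0 1
  have hint : IntegrableOn H (Set.Ioo (0:ℝ) 1) := by
    have h1 : IntervalIntegrable (fun v : ℝ => v ^ (-(2*s))) volume 0 1 :=
      intervalIntegral.intervalIntegrable_rpow' (by linarith)
    have h2 : IntervalIntegrable (fun v : ℝ => (1-v) ^ (-(2*s))) volume 0 1 := by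
      have := h1.comp_sub_left 1
      simpa using this.symm
    have h3 : IntervalIntegrable H volume 0 1 := by
      apply IntervalIntegrable.const_mul
      exact h1.add h2
    have := (intervalIntegrable_iff.mp h3)
    rw [Set.uIoc_of_le (by norm_num : (0:ℝ) ≤ 1)] at this
    exact this.mono_set Set.Ioo_subset_Ioc_self
  refine ⟨Real.sqrt (∫ v in Set.Ioo (0:ℝ) 1, H v) / 4, by positivity, ?_⟩
  intro ξ₁ ξ₂ hξ₁ hξ₂
  set a₁ : ℝ := 1 / (2 + ξ₁) with ha₁
  set a₂ : ℝ := 1 / (2 + ξ₂) with ha₂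
  have h21 : (0:ℝ) < 2 + ξ₁ := by have := hξ₁.1; linarith
  have h22 : (0:ℝ) < 2 + ξ₂ := by have := hξ₂.1; linarith
  have ha₁I : a₁ ∈ Set.Icc c d := ⟨one_div_le_one_div_of_le h21 (by have := hξ₁.2; linarith),
    one_div_le_one_div_of_le h2l (by have := hξ₁.1; linarith)⟩
  have ha₂I : a₂ ∈ Set.Icc c d := ⟨one_div_le_one_div_of_le h22 (by have := hξ₂.2; linarith),
    one_div_le_one_div_of_le h2l (by have := hξ₂.1; linarith)⟩
  have haa : |a₁ - a₂| ≤ |ξ₁ - ξ₂| / 4 := by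
    rw [ha₁, ha₂, div_sub_div _ _ (ne_of_gt h21) (ne_of_gt h22)]
    rw [abs_div]
    rw [abs_of_pos (by positivity : (0:ℝ) < (2+ξ₁)*(2+ξ₂))]
    rw [div_le_div_iff₀ (by positivity) (by norm_num)]
    have h4 : (4:ℝ) ≤ (2+ξ₁)*(2+ξ₂) := by nlinarith [hξ₁.1, hξ₂.1, hξl]
    have habs : |1 * (2+ξ₂) - (2+ξ₁) * 1| = |ξ₁ - ξ₂| := by
      rw [one_mul, mul_one, abs_sub_comm]; ring_nf
    rw [habs]
    nlinarith [abs_nonneg (ξ₁ - ξ₂)]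
  -- pointwise bound
  have key : ∀ v ∈ Set.Ioo (0:ℝ) 1,
      ((-((1 / v - 1) ^ a₁)) - (-((1 / v - 1) ^ a₂))) ^ 2
        ≤ (|ξ₁ - ξ₂|/4)^2 * H v := by
    intro v hv
    obtain ⟨hv0, hv1⟩ := hv
    set x : ℝ := 1 / v - 1 with hxdef
    have hx : 0 < x := by
      rw [hxdef]
      have : 1 < 1 / v := by rw [lt_div_iff₀ hv0]; linarith
      linarith
    have h1v : 0 < 1 - v := by linarith
    have hxeq : x = (1 - v) / v := by rw [hxdef]; field_simp
    -- derivative bound on Icc c d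
    have Gnn : 0 ≤ (2/η) * (v ^ (-s) + (1-v) ^ (-s)) := by positivity
    have hderiv : ∀ t ∈ Set.Icc c d,
        ‖x ^ t * Real.log x‖ ≤ (2/η) * (v ^ (-s) + (1-v) ^ (-s)) := by
      intro t ht
      have ht0 : 0 ≤ t := le_trans hc0.le ht.1
      rw [Real.norm_eq_abs, abs_mul, abs_of_nonneg (Real.rpow_nonneg hx.le t)]
      -- bound x^t ≤ v^(-d)
      have hxt : x ^ t ≤ v ^ (-d) := by
        rw [hxeq, Real.div_rpow h1v.le hv0.le]
        have e1 : (1-v) ^ t ≤ 1 := Real.rpow_le_one h1v.le (by linarith) ht0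
        have e2 : (0:ℝ) < v ^ t := Real.rpow_pos_of_pos hv0 t
        have e3 : (1-v) ^ t / v ^ t ≤ 1 / v ^ t := by gcongr
        have e4 : 1 / v ^ t = v ^ (-t) := by
          rw [Real.rpow_neg hv0.le, one_div]
        have e5 : v ^ (-t) ≤ v ^ (-d) :=
          Real.rpow_le_rpow_of_exponent_ge hv0 hv1.le (neg_le_neg ht.2)
        calc (1-v) ^ t / v ^ t ≤ 1 / v ^ t := e3
          _ = v ^ (-t) := e4
          _ ≤ v ^ (-d) := e5
      -- bound |log x|
      have hlog : |Real.log x| ≤ (v ^ (-η) + (1-v) ^ (-η)) / η := by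
        have e1 : Real.log x = Real.log (1-v) - Real.log v := by
          rw [hxeq, Real.log_div (ne_of_gt h1v) (ne_of_gt hv0)]
        have e2 : |Real.log x| ≤ -Real.log (1-v) + -Real.log v := by
          rw [e1]
          have l1 : Real.log (1-v) ≤ 0 := Real.log_nonpos h1v.le (by linarith)
          have l2 : Real.log v ≤ 0 := Real.log_nonpos hv0.le hv1.le
          rw [abs_sub_le_iff]; constructor <;> linarith
        have l3 := neg_log_le_aux hη0 hv0
        have l4 := neg_log_le_aux hη0 h1v
        calc |Real.log x| ≤ -Real.log (1-v) + -Real.log v := e2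
          _ ≤ (1-v) ^ (-η) / η + v ^ (-η) / η := by linarith
          _ = (v ^ (-η) + (1-v) ^ (-η)) / η := by ring
      have hmul : x ^ t * |Real.log x| ≤ v ^ (-d) * ((v ^ (-η) + (1-v) ^ (-η)) / η) :=
        mul_le_mul hxt hlog (abs_nonneg _) (Real.rpow_nonneg hv0.le _)
      -- combine products
      have p1 : v ^ (-d) * v ^ (-η) = v ^ (-s) := by
        rw [← Real.rpow_add hv0, hs]; ring_nf
      have p2 : v ^ (-d) * (1-v) ^ (-η) ≤ v ^ (-s) + (1-v) ^ (-s) := by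
        rcases le_total v (1-v) with h | h
        · have e : (1-v) ^ (-η) ≤ v ^ (-η) :=
            Real.rpow_le_rpow_of_nonpos hv0 h (by linarith)
          have : v ^ (-d) * (1-v) ^ (-η) ≤ v ^ (-d) * v ^ (-η) :=
            mul_le_mul_of_nonneg_left e (Real.rpow_nonneg hv0.le _)
          rw [p1] at this
          exact this.trans (le_add_of_nonneg_right
            (Real.rpow_nonneg h1v.le (-s)))
        · have e : v ^ (-d) ≤ (1-v) ^ (-d) :=
            Real.rpow_le_rpow_of_nonpos h1v h (by linarith [hc0.trans_le hcd])
          have e2 : v ^ (-d) * (1-v) ^ (-η) ≤ (1-v) ^ (-d) * (1-v) ^ (-η) :=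
            mul_le_mul_of_nonneg_right e (Real.rpow_nonneg h1v.le _)
          have e3 : (1-v) ^ (-d) * (1-v) ^ (-η) = (1-v) ^ (-s) := by
            rw [← Real.rpow_add h1v, hs]; ring_nf
          rw [e3] at e2
          exact e2.trans (le_add_of_nonneg_left (Real.rpow_nonneg hv0.le _))
      have expand : v ^ (-d) * ((v ^ (-η) + (1-v) ^ (-η)) / η)
          = (v ^ (-d) * v ^ (-η) + v ^ (-d) * (1-v) ^ (-η)) / η := by ring
      have vnn : 0 ≤ v ^ (-s) := Real.rpow_nonneg hv0.le _
      have wnn : 0 ≤ (1-v) ^ (-s) := Real.rpow_nonneg h1v.le _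
      calc x ^ t * |Real.log x|
          ≤ (v ^ (-d) * v ^ (-η) + v ^ (-d) * (1-v) ^ (-η)) / η := by
            rw [← expand]; exact hmul
        _ ≤ (v ^ (-s) + (v ^ (-s) + (1-v) ^ (-s))) / η := by
            gcongr
            rw [p1]
        _ ≤ (2/η) * (v ^ (-s) + (1-v) ^ (-s)) := by
            have heq : (2/η) * (v ^ (-s) + (1-v) ^ (-s))
                = (2 * (v ^ (-s) + (1-v) ^ (-s))) / η := by ring
            rw [heq]
            gcongr ?_ / η
            linarith
    -- MVT
    have hmvt : ‖x ^ a₁ - x ^ a₂‖ ≤ (2/η) * (v ^ (-s) + (1-v) ^ (-s)) * ‖a₁ - a₂‖ := by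
      apply Convex.norm_image_sub_le_of_norm_hasDerivWithin_le
        (f := fun t => x ^ t) (f' := fun t => x ^ t * Real.log x)
        (fun t _ => ((Real.hasStrictDerivAt_const_rpow hx t).hasDerivAt).hasDerivWithinAt)
        hderiv (convex_Icc c d) ha₂I ha₁I
    rw [Real.norm_eq_abs, Real.norm_eq_abs] at hmvt
    have habs2 : |x ^ a₁ - x ^ a₂| ≤ (2/η) * (v ^ (-s) + (1-v) ^ (-s)) * (|ξ₁ - ξ₂|/4) := by
      refine hmvt.trans (mul_le_mul_of_nonneg_left haa Gnn)
    have hsq : ((-(x ^ a₁)) - (-(x ^ a₂)))^2 = |x ^ a₁ - x ^ a₂|^2 := by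
      rw [sq_abs]; ring
    rw [hsq]
    have step : |x ^ a₁ - x ^ a₂|^2
        ≤ ((2/η) * (v ^ (-s) + (1-v) ^ (-s)))^2 * (|ξ₁ - ξ₂|/4)^2 := by
      rw [← mul_pow]
      exact pow_le_pow_left₀ (abs_nonneg _) habs2 2
    refine step.trans ?_
    rw [hH]
    have vnn : 0 ≤ v ^ (-s) := Real.rpow_nonneg hv0.le _
    have wnn : 0 ≤ (1-v) ^ (-s) := Real.rpow_nonneg h1v.le _
    have q1 : (v ^ (-s))^2 = v ^ (-(2*s)) := by
      rw [← Real.rpow_natCast (v ^ (-s)) 2, ← Real.rpow_mul hv0.le]; norm_num; ring_nf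
    have q2 : ((1-v) ^ (-s))^2 = (1-v) ^ (-(2*s)) := by
      rw [← Real.rpow_natCast ((1-v) ^ (-s)) 2, ← Real.rpow_mul h1v.le]; norm_num; ring_nf
    have hGH : ((2/η) * (v ^ (-s) + (1-v) ^ (-s)))^2
        ≤ (2/η)^2 * 2 * (v ^ (-(2*s)) + (1-v) ^ (-(2*s))) := by
      rw [← q1, ← q2]
      exact sq_add_le_aux (2/η) _ _
    calc ((2/η) * (v ^ (-s) + (1-v) ^ (-s)))^2 * (|ξ₁ - ξ₂|/4)^2
        ≤ ((2/η)^2 * 2 * (v ^ (-(2*s)) + (1-v) ^ (-(2*s)))) * (|ξ₁ - ξ₂|/4)^2 :=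
          mul_le_mul_of_nonneg_right hGH (by positivity)
      _ = (|ξ₁ - ξ₂|/4)^2 * ((2/η)^2 * 2 * (v ^ (-(2*s)) + (1-v) ^ (-(2*s)))) := by ring
  -- integral comparison
  have hmono : (∫ v in Set.Ioo (0:ℝ) 1,
      ((-((1 / v - 1) ^ a₁)) - (-((1 / v - 1) ^ a₂))) ^ 2)
      ≤ ∫ v in Set.Ioo (0:ℝ) 1, (|ξ₁ - ξ₂|/4)^2 * H v := by
    apply integral_mono_of_nonneg
    · filter_upwards with v using sq_nonneg _
    · exact (hint.const_mul _)
    · filter_upwards [ae_restrict_mem measurableSet_Ioo] with v hv using key v hv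
  have hHnn : 0 ≤ ∫ v in Set.Ioo (0:ℝ) 1, H v := by
    apply setIntegral_nonneg measurableSet_Ioo
    intro v hv
    have h1 : 0 < v := hv.1
    have h2 : 0 < 1 - v := by linarith [hv.2]
    rw [hH]
    positivity
  calc Real.sqrt (∫ v in Set.Ioo (0:ℝ) 1,
          ((-((1 / v - 1) ^ a₁)) - (-((1 / v - 1) ^ a₂))) ^ 2)
      ≤ Real.sqrt (∫ v in Set.Ioo (0:ℝ) 1, (|ξ₁ - ξ₂|/4)^2 * H v) :=
        Real.sqrt_le_sqrt hmono
    _ = Real.sqrt ((|ξ₁ - ξ₂|/4)^2 * ∫ v in Set.Ioo (0:ℝ) 1, H v) := by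
        rw [integral_const_mul]
    _ = (|ξ₁ - ξ₂|/4) * Real.sqrt (∫ v in Set.Ioo (0:ℝ) 1, H v) := by
        rw [Real.sqrt_mul (sq_nonneg _), Real.sqrt_sq (by positivity)]
    _ = Real.sqrt (∫ v in Set.Ioo (0:ℝ) 1, H v) / 4 * |ξ₁ - ξ₂| := by ring
end

section
/- Let σ > 0 and let π : ℝ → [0,∞) be measurable with ∫ τ² π(τ) dτ < ∞. Then lim_{μ → 0, μ ≠ 0} (1/μ²) ∫ |ψ_{0,σ²}(τ) − ψ_{μ,σ²}(τ)|² π(τ) dτ = ∫ e^{−σ²τ²} τ² π(τ) dτ. In particular, the π-weighted L² distance between the characteristic functions of N(0,σ²) and N(μ,σ²) vanishes linearly in |μ| as μ → 0. -/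
open MeasureTheory

lemma key0 (θ : ℝ) : ‖1 - Complex.exp ((θ:ℂ) * Complex.I)‖ ^ 2
    = 4 * Real.sin (θ/2)^2 := by
  rw [Complex.sq_norm, Complex.exp_mul_I, ← Complex.ofReal_cos, ← Complex.ofReal_sin]
  have hs := Real.sin_sq_eq_half_sub (θ/2)
  have h3 : (2:ℝ)*(θ/2) = θ := by ring
  rw [h3] at hs
  simp [Complex.normSq_apply, Complex.cos_ofReal_re, Complex.sin_ofReal_re]
  nlinarith [Real.sin_sq_add_cos_sq θ]

lemma key (σ μ τ : ℝ) :
    (‖Complex.exp (Complex.I * (τ:ℂ) * (0:ℂ) - (σ:ℂ)^2*(τ:ℂ)^2/2)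
      - Complex.exp (Complex.I*(τ:ℂ)*(μ:ℂ) - (σ:ℂ)^2*(τ:ℂ)^2/2)‖)^2
    = Real.exp (-(σ^2*τ^2)) * (4 * Real.sin (τ*μ/2)^2) := by
  have h1 : Complex.I * (τ:ℂ) * (0:ℂ) - (σ:ℂ)^2*(τ:ℂ)^2/2 = ((-(σ^2*τ^2)/2 : ℝ) : ℂ) := by
    push_cast; ring
  have h2 : Complex.I*(τ:ℂ)*(μ:ℂ) - (σ:ℂ)^2*(τ:ℂ)^2/2
      = ((-(σ^2*τ^2)/2 : ℝ):ℂ) + ((τ*μ:ℝ):ℂ)*Complex.I := by push_cast; ring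
  rw [h1, h2, Complex.exp_add]
  have h4 : Complex.exp ((-(σ^2*τ^2)/2 : ℝ):ℂ) - Complex.exp ((-(σ^2*τ^2)/2 : ℝ):ℂ) * Complex.exp (((τ*μ:ℝ):ℂ)*Complex.I)
      = Complex.exp ((-(σ^2*τ^2)/2 : ℝ):ℂ) * (1 - Complex.exp (((τ*μ:ℝ):ℂ)*Complex.I)) := by ring
  rw [h4, norm_mul, mul_pow, ← Complex.ofReal_exp, Complex.norm_real, Real.norm_eq_abs,
    abs_of_nonneg (Real.exp_pos _).le, key0, sq, ← Real.exp_add]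
  norm_num

lemma sin_slope : Filter.Tendsto (fun t : ℝ => Real.sin t / t) (nhdsWithin 0 {0}ᶜ) (nhds 1) := by
  have h := (hasDerivAt_iff_tendsto_slope).1 (Real.hasDerivAt_sin 0)
  rw [Real.cos_zero] at h
  refine h.congr' ?_
  filter_upwards [self_mem_nhdsWithin] with t ht
  simp [slope_def_field, Real.sin_zero, div_eq_iff]

/-- The `π`-weighted `L²` distance between the characteristic functions of
`N(0,σ²)` and `N(μ,σ²)` vanishes linearly in `|μ|` as `μ → 0`:
`(1/μ²)∫|ψ_{0,σ²} - ψ_{μ,σ²}|² π → ∫ e^{-σ²τ²} τ² π(τ) dτ`. -/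
theorem stmt_11 (σ : ℝ) (hσ : 0 < σ) (π : ℝ → ℝ) (hπm : Measurable π)
    (hπ0 : ∀ τ, 0 ≤ π τ) (hπi : Integrable (fun τ => τ ^ 2 * π τ)) :
    Filter.Tendsto
      (fun μ : ℝ => (1 / μ ^ 2) *
        ∫ τ : ℝ, (‖
            (Complex.exp (Complex.I * (τ : ℂ) * (0 : ℂ) - (σ : ℂ) ^ 2 * (τ : ℂ) ^ 2 / 2)
              - Complex.exp (Complex.I * (τ : ℂ) * (μ : ℂ)
                  - (σ : ℂ) ^ 2 * (τ : ℂ) ^ 2 / 2))‖) ^ 2 * π τ)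
      (nhdsWithin 0 {0}ᶜ)
      (nhds (∫ τ : ℝ, Real.exp (-(σ ^ 2 * τ ^ 2)) * τ ^ 2 * π τ)) := by
  set F : ℝ → ℝ → ℝ := fun μ τ =>
    Real.exp (-(σ^2*τ^2)) * (2 * Real.sin (τ*μ/2) / μ)^2 * π τ with hF
  have hEq : ∀ μ : ℝ, (1 / μ ^ 2) *
      ∫ τ : ℝ, (‖
          (Complex.exp (Complex.I * (τ : ℂ) * (0 : ℂ) - (σ : ℂ) ^ 2 * (τ : ℂ) ^ 2 / 2)
            - Complex.exp (Complex.I * (τ : ℂ) * (μ : ℂ)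
                - (σ : ℂ) ^ 2 * (τ : ℂ) ^ 2 / 2))‖) ^ 2 * π τ
      = ∫ τ : ℝ, F μ τ := by
    intro μ
    rw [← integral_const_mul]
    refine integral_congr_ae (Filter.Eventually.of_forall fun τ => ?_)
    dsimp only
    rw [key σ μ τ, hF]
    dsimp only
    rw [div_pow]
    ring
  simp only [hEq]
  refine tendsto_integral_filter_of_dominated_convergence (fun τ => τ^2 * π τ) ?_ ?_ hπi ?_
  · refine Filter.Eventually.of_forall fun μ => ?_
    apply Measurable.aestronglyMeasurable
    fun_prop
  · filter_upwards [self_mem_nhdsWithin] with μ hμ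
    refine Filter.Eventually.of_forall fun τ => ?_
    have hμ0 : μ ≠ 0 := hμ
    have hμ2 : (0:ℝ) < μ^2 := by positivity
    have h1 : Real.exp (-(σ^2*τ^2)) ≤ 1 := Real.exp_le_one_iff.2 (neg_nonpos.2 (by positivity))
    have h2 : Real.sin (τ*μ/2)^2 ≤ (τ*μ/2)^2 := Real.sin_sq_le_sq
    have hFnn : 0 ≤ F μ τ := by
      exact mul_nonneg (mul_nonneg (Real.exp_pos _).le (sq_nonneg _)) (hπ0 τ)
    rw [Real.norm_eq_abs, abs_of_nonneg hFnn, hF]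
    dsimp only
    have h3 : (2 * Real.sin (τ*μ/2) / μ)^2 ≤ τ^2 := by
      rw [div_pow, div_le_iff₀ hμ2]
      nlinarith
    have h4 : Real.exp (-(σ^2*τ^2)) * (2 * Real.sin (τ*μ/2) / μ)^2 ≤ 1 * τ^2 := by
      apply mul_le_mul h1 h3 (by positivity) (by norm_num)
    calc Real.exp (-(σ^2*τ^2)) * (2 * Real.sin (τ*μ/2) / μ)^2 * π τ
        ≤ 1 * τ^2 * π τ := mul_le_mul_of_nonneg_right h4 (hπ0 τ)
      _ = τ^2 * π τ := by ring
  · refine Filter.Eventually.of_forall fun τ => ?_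
    rcases eq_or_ne τ 0 with rfl | hτ
    · have : (fun μ : ℝ => F μ 0) = fun _ => 0 := by
        funext μ; rw [hF]; simp
      rw [this]
      simpa using tendsto_const_nhds.congr (fun μ => rfl)
    · have hg : Filter.Tendsto (fun μ : ℝ => 2 * Real.sin (τ*μ/2) / μ)
          (nhdsWithin 0 {0}ᶜ) (nhds τ) := by
        have hmap : Filter.Tendsto (fun μ : ℝ => τ*μ/2) (nhdsWithin 0 {0}ᶜ)
            (nhdsWithin 0 {0}ᶜ) := by
          rw [tendsto_nhdsWithin_iff]
          constructor
          · have : Filter.Tendsto (fun μ : ℝ => τ*μ/2) (nhds 0) (nhds (τ*0/2)) :=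
              ((continuous_const.mul continuous_id).div_const 2).tendsto 0
            simpa using this.mono_left nhdsWithin_le_nhds
          · filter_upwards [self_mem_nhdsWithin] with μ hμ
            have : μ ≠ 0 := hμ
            simp only [Set.mem_compl_iff, Set.mem_singleton_iff]
            exact div_ne_zero (mul_ne_zero hτ this) two_ne_zero
        have := (sin_slope.comp hmap).const_mul τ
        rw [mul_one] at this
        refine this.congr' ?_
        filter_upwards [self_mem_nhdsWithin] with μ hμ
        have hμ0 : μ ≠ 0 := hμ
        simp only [Function.comp_apply]
        field_simp
      have := ((hg.pow 2).const_mul (Real.exp (-(σ^2*τ^2)))).mul_const (π τ)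
      exact this.congr (fun μ => rfl)
end

section
/- Let μ_f, μ_g ∈ ℝ and σ_f, σ_g > 0, and let f and g denote the Gaussian densities of N(μ_f, σ_f²) and N(μ_g, σ_g²). Then the squared Hellinger distance has the closed form (1/2)∫_ℝ (√f(x) − √g(x))² dx = 1 − √(2σ_f σ_g/(σ_f² + σ_g²)) · exp( −(μ_f − μ_g)²/(4(σ_f² + σ_g²)) ). -/
open MeasureTheory

lemma gauss_shift_int (b c : ℝ) (hb : 0 < b) :
    ∫ x : ℝ, Real.exp (-b * (x - c) ^ 2) = Real.sqrt (Real.pi / b) := by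
  have := integral_sub_right_eq_self (μ := volume)
    (fun x : ℝ => Real.exp (-b * x ^ 2)) c
  rw [this, integral_gaussian]

lemma gauss_shift_integrable (b c : ℝ) (hb : 0 < b) :
    Integrable (fun x : ℝ => Real.exp (-b * (x - c) ^ 2)) := by
  exact (integrable_exp_neg_mul_sq hb).comp_sub_right c

lemma gauss_pdf_int (μ σ : ℝ) (hσ : 0 < σ) :
    ∫ x : ℝ, (σ * Real.sqrt (2 * Real.pi))⁻¹ *
        Real.exp (-(x - μ) ^ 2 / (2 * σ ^ 2)) = 1 := by
  have hb : 0 < (2 * σ ^ 2)⁻¹ := by positivity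
  have h : ∀ x : ℝ, -(x - μ) ^ 2 / (2 * σ ^ 2) = -(2 * σ ^ 2)⁻¹ * (x - μ) ^ 2 := by
    intro x; field_simp
  simp_rw [h, integral_const_mul, gauss_shift_int _ μ hb]
  rw [show Real.pi / (2 * σ ^ 2)⁻¹ = (2 * Real.pi) * σ ^ 2 by field_simp]
  rw [Real.sqrt_mul (show (0:ℝ) ≤ 2 * Real.pi by positivity) (σ ^ 2), Real.sqrt_sq hσ.le, mul_comm (Real.sqrt (2 * Real.pi)) σ]
  exact inv_mul_cancel₀ (by positivity)

lemma gauss_pdf_integrable (μ σ : ℝ) (hσ : 0 < σ) :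
    Integrable (fun x : ℝ => (σ * Real.sqrt (2 * Real.pi))⁻¹ *
        Real.exp (-(x - μ) ^ 2 / (2 * σ ^ 2))) := by
  have hb : 0 < (2 * σ ^ 2)⁻¹ := by positivity
  have h : ∀ x : ℝ, -(x - μ) ^ 2 / (2 * σ ^ 2) = -(2 * σ ^ 2)⁻¹ * (x - μ) ^ 2 := by
    intro x; field_simp
  simp_rw [h]
  exact (gauss_shift_integrable _ μ hb).const_mul _

/-- Closed form for the squared Hellinger distance between two univariate
Gaussian densities. -/
theorem stmt_12 (μf μg σf σg : ℝ) (hσf : 0 < σf) (hσg : 0 < σg) :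
    (1 / 2) * (∫ x : ℝ,
        (Real.sqrt ((σf * Real.sqrt (2 * Real.pi))⁻¹ *
            Real.exp (-(x - μf) ^ 2 / (2 * σf ^ 2)))
          - Real.sqrt ((σg * Real.sqrt (2 * Real.pi))⁻¹ *
            Real.exp (-(x - μg) ^ 2 / (2 * σg ^ 2)))) ^ 2)
      = 1 - Real.sqrt (2 * σf * σg / (σf ^ 2 + σg ^ 2)) *
          Real.exp (-(μf - μg) ^ 2 / (4 * (σf ^ 2 + σg ^ 2))) := by
  have hπ : 0 < Real.pi := Real.pi_pos
  have hs : 0 < σf ^ 2 + σg ^ 2 := by positivity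
  set s : ℝ := σf ^ 2 + σg ^ 2 with hs_def
  set a : ℝ := s / (4 * σf ^ 2 * σg ^ 2) with ha_def
  have ha : 0 < a := by positivity
  set m : ℝ := (σg ^ 2 * μf + σf ^ 2 * μg) / s with hm_def
  set C : ℝ := Real.sqrt ((σf * σg * (2 * Real.pi))⁻¹) *
      Real.exp (-(μf - μg) ^ 2 / (4 * s)) with hC_def
  -- pointwise identity
  have key : (fun x : ℝ =>
      (Real.sqrt ((σf * Real.sqrt (2 * Real.pi))⁻¹ *
            Real.exp (-(x - μf) ^ 2 / (2 * σf ^ 2)))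
          - Real.sqrt ((σg * Real.sqrt (2 * Real.pi))⁻¹ *
            Real.exp (-(x - μg) ^ 2 / (2 * σg ^ 2)))) ^ 2)
      = fun x : ℝ =>
        (σf * Real.sqrt (2 * Real.pi))⁻¹ * Real.exp (-(x - μf) ^ 2 / (2 * σf ^ 2))
        + (σg * Real.sqrt (2 * Real.pi))⁻¹ * Real.exp (-(x - μg) ^ 2 / (2 * σg ^ 2))
        - 2 * (C * Real.exp (-a * (x - m) ^ 2)) := by
    funext x
    set Fx : ℝ := (σf * Real.sqrt (2 * Real.pi))⁻¹ *
        Real.exp (-(x - μf) ^ 2 / (2 * σf ^ 2)) with hFx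
    set Gx : ℝ := (σg * Real.sqrt (2 * Real.pi))⁻¹ *
        Real.exp (-(x - μg) ^ 2 / (2 * σg ^ 2)) with hGx
    have hF0 : 0 ≤ Fx := by rw [hFx]; positivity
    have hG0 : 0 ≤ Gx := by rw [hGx]; positivity
    have hmul : Fx * Gx = (σf * σg * (2 * Real.pi))⁻¹ *
        Real.exp (-(x - μf) ^ 2 / (2 * σf ^ 2) + -(x - μg) ^ 2 / (2 * σg ^ 2)) := by
      rw [hFx, hGx, Real.exp_add, mul_inv, mul_inv, mul_inv]
      have h2 : (Real.sqrt (2 * Real.pi))⁻¹ * (Real.sqrt (2 * Real.pi))⁻¹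
          = (2 * Real.pi)⁻¹ := by
        rw [← mul_inv, Real.mul_self_sqrt (by positivity)]
      calc σf⁻¹ * (Real.sqrt (2 * Real.pi))⁻¹ * Real.exp (-(x - μf) ^ 2 / (2 * σf ^ 2))
            * (σg⁻¹ * (Real.sqrt (2 * Real.pi))⁻¹ * Real.exp (-(x - μg) ^ 2 / (2 * σg ^ 2)))
          = σf⁻¹ * σg⁻¹ * ((Real.sqrt (2 * Real.pi))⁻¹ * (Real.sqrt (2 * Real.pi))⁻¹)
            * (Real.exp (-(x - μf) ^ 2 / (2 * σf ^ 2))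
              * Real.exp (-(x - μg) ^ 2 / (2 * σg ^ 2))) := by ring
        _ = _ := by rw [h2]; ring
    have h1 : Real.sqrt Fx * Real.sqrt Gx = C * Real.exp (-a * (x - m) ^ 2) := by
      rw [← Real.sqrt_mul hF0, hmul,
        Real.sqrt_mul (by positivity), ← Real.exp_half]
      have hexp : (-(x - μf) ^ 2 / (2 * σf ^ 2) + -(x - μg) ^ 2 / (2 * σg ^ 2)) / 2
          = -(μf - μg) ^ 2 / (4 * s) + -a * (x - m) ^ 2 := by
        rw [ha_def, hm_def, hs_def]
        field_simp
        ring
      rw [hexp, Real.exp_add, hC_def]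
      ring
    rw [sub_sq, Real.sq_sqrt hF0, Real.sq_sqrt hG0]
    linear_combination (-2 : ℝ) * h1
  rw [key]
  have intF := gauss_pdf_integrable μf σf hσf
  have intG := gauss_pdf_integrable μg σg hσg
  have intE : Integrable (fun x : ℝ => 2 * (C * Real.exp (-a * (x - m) ^ 2))) :=
    ((gauss_shift_integrable a m ha).const_mul C).const_mul 2
  have intFG : Integrable (fun x : ℝ =>
      (σf * Real.sqrt (2 * Real.pi))⁻¹ * Real.exp (-(x - μf) ^ 2 / (2 * σf ^ 2))
      + (σg * Real.sqrt (2 * Real.pi))⁻¹ * Real.exp (-(x - μg) ^ 2 / (2 * σg ^ 2))) :=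
    intF.add intG
  rw [integral_sub intFG intE, integral_add intF intG,
    integral_const_mul 2, integral_const_mul C,
    gauss_pdf_int μf σf hσf, gauss_pdf_int μg σg hσg, gauss_shift_int a m ha]
  have hCval : C * Real.sqrt (Real.pi / a)
      = Real.sqrt (2 * σf * σg / s) * Real.exp (-(μf - μg) ^ 2 / (4 * s)) := by
    rw [hC_def]
    have : Real.sqrt ((σf * σg * (2 * Real.pi))⁻¹) * Real.sqrt (Real.pi / a)
        = Real.sqrt (2 * σf * σg / s) := by
      rw [← Real.sqrt_mul (by positivity)]
      congr 1
      rw [ha_def]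
      field_simp
      ring
    calc Real.sqrt ((σf * σg * (2 * Real.pi))⁻¹) * Real.exp (-(μf - μg) ^ 2 / (4 * s))
          * Real.sqrt (Real.pi / a)
        = (Real.sqrt ((σf * σg * (2 * Real.pi))⁻¹) * Real.sqrt (Real.pi / a))
          * Real.exp (-(μf - μg) ^ 2 / (4 * s)) := by ring
      _ = _ := by rw [this]
  rw [hCval]
  ring
end

section
/- Let C₁ ≥ 0, 0 ≤ C₂ < 1, and δ ≥ 0. Let θ₁, θ₂ ∈ ℝ with |θ₁| ≤ C₂, |θ₂| ≤ C₂, and |θ₁ − θ₂| ≤ δ. Let I be a set and q₁, q₂ : I → ℝ with |q_i(v)| ≤ C₁ for all v ∈ I and i = 1,2, and sup_{v∈I} |q₁(v) − q₂(v)| ≤ δ. Fix a sequence (ν_t)_{t≥1} in I and an initial value y₀ ∈ ℝ with |y₀| ≤ C₁/(1 − C₂), and define recursively y_t^{(i)} = θ_i·y_{t−1}^{(i)} + q_i(ν_t), with y₀^{(1)} = y₀^{(2)} = y₀. Then for every t ≥ 0: |y_t^{(1)} − y_t^{(2)}| ≤ δ·(1 + C₁/(1 − C₂))/(1 − C₂).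 -/
/-- Lipschitz property of a simulated AR(1) path with respect to the
autoregressive parameter and the quantile function of the shocks. -/
theorem stmt_18 (C₁ C₂ δ : ℝ) (hC₁ : 0 ≤ C₁) (hC₂0 : 0 ≤ C₂) (hC₂ : C₂ < 1)
    (hδ : 0 ≤ δ)
    (θ₁ θ₂ : ℝ) (hθ₁ : |θ₁| ≤ C₂) (hθ₂ : |θ₂| ≤ C₂) (hθδ : |θ₁ - θ₂| ≤ δ)
    {I : Type*} (q₁ q₂ : I → ℝ)
    (hq₁ : ∀ v, |q₁ v| ≤ C₁) (hq₂ : ∀ v, |q₂ v| ≤ C₁)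
    (hqδ : ∀ v, |q₁ v - q₂ v| ≤ δ)
    (ν : ℕ → I) (y₀ : ℝ) (hy₀ : |y₀| ≤ C₁ / (1 - C₂))
    (y₁ y₂ : ℕ → ℝ) (h₁0 : y₁ 0 = y₀) (h₂0 : y₂ 0 = y₀)
    (h₁ : ∀ t : ℕ, y₁ (t + 1) = θ₁ * y₁ t + q₁ (ν (t + 1)))
    (h₂ : ∀ t : ℕ, y₂ (t + 1) = θ₂ * y₂ t + q₂ (ν (t + 1))) :
    ∀ t : ℕ, |y₁ t - y₂ t| ≤ δ * (1 + C₁ / (1 - C₂)) / (1 - C₂) := by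
  have h1C : (0:ℝ) < 1 - C₂ := by linarith
  set M : ℝ := C₁ / (1 - C₂) with hM
  have hM0 : 0 ≤ M := div_nonneg hC₁ h1C.le
  have hMeq : C₂ * M + C₁ = M := by
    rw [hM]
    linear_combination -(div_mul_cancel₀ C₁ h1C.ne')
  -- bound |y₂ t| ≤ M
  have hbound : ∀ t, |y₂ t| ≤ M := by
    intro t
    induction t with
    | zero => simpa [h₂0] using hy₀
    | succ t ih =>
      rw [h₂ t]
      calc |θ₂ * y₂ t + q₂ (ν (t+1))| ≤ |θ₂ * y₂ t| + |q₂ (ν (t+1))| := abs_add_le _ _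
        _ ≤ C₂ * M + C₁ := by
            rw [abs_mul]
            gcongr
            exact hq₂ _
        _ = M := hMeq
  set B : ℝ := δ * (1 + M) / (1 - C₂) with hB
  have hBeq : C₂ * B + δ * (1 + M) = B := by
    rw [hB]
    linear_combination -(div_mul_cancel₀ (δ * (1 + M)) h1C.ne')
  intro t
  induction t with
  | zero => simp [h₁0, h₂0, hB]; positivity
  | succ t ih =>
    rw [h₁ t, h₂ t]
    have key : θ₁ * y₁ t + q₁ (ν (t+1)) - (θ₂ * y₂ t + q₂ (ν (t+1)))
        = θ₁ * (y₁ t - y₂ t) + (θ₁ - θ₂) * y₂ t + (q₁ (ν (t+1)) - q₂ (ν (t+1))) := by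
      ring
    rw [key]
    calc |θ₁ * (y₁ t - y₂ t) + (θ₁ - θ₂) * y₂ t + (q₁ (ν (t+1)) - q₂ (ν (t+1)))|
        ≤ |θ₁ * (y₁ t - y₂ t)| + |(θ₁ - θ₂) * y₂ t| + |q₁ (ν (t+1)) - q₂ (ν (t+1))| :=
          (abs_add_le _ _).trans (by gcongr; exact abs_add_le _ _)
      _ ≤ C₂ * B + (δ * M + δ) := by
          rw [abs_mul, abs_mul]
          have h1 : |θ₁| * |y₁ t - y₂ t| ≤ C₂ * B := by gcongr
          have h2 : |θ₁ - θ₂| * |y₂ t| ≤ δ * M := by gcongr; exact hbound t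
          have h3 := hqδ (ν (t+1))
          linarith
      _ = B := by linarith [hBeq]
end

section
/- Let p ≥ 1, let 0 ≤ C₃ < 1 and C₄ ≥ 0, and let g : ℝ × ℝ^p → ℝ satisfy |g(y,θ) − g(ỹ,θ)| ≤ C₃·|y − ỹ| for all y, ỹ ∈ ℝ and all θ ∈ ℝ^p, and |g(y,θ) − g(y,θ̃)| ≤ C₄·‖θ − θ̃‖ for all y ∈ ℝ and all θ, θ̃ ∈ ℝ^p. Let δ ≥ 0, let θ₁, θ₂ ∈ ℝ^p with ‖θ₁ − θ₂‖ ≤ δ, let I be a set and q₁, q₂ : I → ℝ with sup_{v∈I}|q₁(v) − q₂(v)| ≤ δ. Fix a sequence (ν_t)_{t≥1} in I and a common initial value y₀^{(1)} = y₀^{(2)}, and define recursively y_t^{(i)} = g(y_{t−1}^{(i)}, θ_i) + q_i(ν_t). Then for every t ≥ 0: |y_t^{(1)} − y_t^{(2)}| ≤ (1 + C₄)·δ/(1 − C₃). -/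
/-- Lipschitz property of a simulated nonlinear autoregressive path with respect
to the parameter and the quantile function of the shocks. -/
theorem stmt_19 (p : ℕ) (hp : 1 ≤ p) (C₃ C₄ : ℝ)
    (hC₃0 : 0 ≤ C₃) (hC₃ : C₃ < 1) (hC₄ : 0 ≤ C₄)
    (g : ℝ → EuclideanSpace ℝ (Fin p) → ℝ)
    (hgy : ∀ (y y' : ℝ) (θ : EuclideanSpace ℝ (Fin p)),
      |g y θ - g y' θ| ≤ C₃ * |y - y'|)
    (hgθ : ∀ (y : ℝ) (θ θ' : EuclideanSpace ℝ (Fin p)),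
      |g y θ - g y θ'| ≤ C₄ * ‖θ - θ'‖)
    (δ : ℝ) (hδ : 0 ≤ δ)
    (θ₁ θ₂ : EuclideanSpace ℝ (Fin p)) (hθ : ‖θ₁ - θ₂‖ ≤ δ)
    {I : Type*} (q₁ q₂ : I → ℝ) (hq : ∀ v, |q₁ v - q₂ v| ≤ δ)
    (ν : ℕ → I) (y0 : ℝ)
    (y₁ y₂ : ℕ → ℝ) (h10 : y₁ 0 = y0) (h20 : y₂ 0 = y0)
    (h1 : ∀ t : ℕ, y₁ (t + 1) = g (y₁ t) θ₁ + q₁ (ν (t + 1)))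
    (h2 : ∀ t : ℕ, y₂ (t + 1) = g (y₂ t) θ₂ + q₂ (ν (t + 1))) :
    ∀ t : ℕ, |y₁ t - y₂ t| ≤ (1 + C₄) * δ / (1 - C₃) := by
  have h1C : 0 < 1 - C₃ := by linarith
  have hB : 0 ≤ (1 + C₄) * δ / (1 - C₃) := by positivity
  intro t
  induction t with
  | zero => simp [h10, h20, hB]
  | succ t ih =>
    rw [h1, h2]
    have key : |y₁ (t+1-1) - y₂ t| ≤ (1+C₄)*δ/(1-C₃) := by simpa using ih
    have e1 : g (y₁ t) θ₁ + q₁ (ν (t+1)) - (g (y₂ t) θ₂ + q₂ (ν (t+1)))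
        = (g (y₁ t) θ₁ - g (y₂ t) θ₁) + (g (y₂ t) θ₁ - g (y₂ t) θ₂)
          + (q₁ (ν (t+1)) - q₂ (ν (t+1))) := by ring
    rw [e1]
    calc |(g (y₁ t) θ₁ - g (y₂ t) θ₁) + (g (y₂ t) θ₁ - g (y₂ t) θ₂)
          + (q₁ (ν (t+1)) - q₂ (ν (t+1)))|
        ≤ |g (y₁ t) θ₁ - g (y₂ t) θ₁| + |g (y₂ t) θ₁ - g (y₂ t) θ₂|
          + |q₁ (ν (t+1)) - q₂ (ν (t+1))| := abs_add_three _ _ _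
      _ ≤ C₃ * ((1+C₄)*δ/(1-C₃)) + C₄ * δ + δ := by
          have a1 := (hgy (y₁ t) (y₂ t) θ₁)
          have a2 := (hgθ (y₂ t) θ₁ θ₂)
          have a3 := hq (ν (t+1))
          nlinarith [ih, mul_le_mul_of_nonneg_left ih hC₃0,
            mul_le_mul_of_nonneg_left hθ hC₄]
      _ = (1+C₄)*δ/(1-C₃) := by field_simp; ring
end
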